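/- arXiv:1312.5943 — 9 statements merged into one kernel-verified Lean document; each statement's English description precedes it below -/
import Mathlib

section
/- Let ℓ ≥ 1 be an odd integer, and let k, n be positive integers with w = n + k. Then ∑_{i=0}^{k} (n+i)^ℓ = ∑_{i=k+1}^{2k} (n+i)^ℓ holds if and only if w^ℓ = 2 ∑_{m odd, 1 ≤ m ≤ ℓ} binom(ℓ, m) · w^{ℓ−m} · ∑_{i=1}^{k} i^m. -/
open Finset

private lemma key_pow (ℓ : ℕ) (w j : ℤ) :
    (w + j) ^ ℓ - (w - j) ^ ℓ =
      ∑ m ∈ range (ℓ + 1),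
        (if Odd m then 2 * (ℓ.choose m : ℤ) * w ^ (ℓ - m) * j ^ m else 0) := by
  have h1 : w + j = j + w := by ring
  have h2 : w - j = -j + w := by ring
  rw [h1, h2, add_pow, add_pow, ← Finset.sum_sub_distrib]
  refine Finset.sum_congr rfl fun m _ => ?_
  rcases Nat.even_or_odd m with hm | hm
  · simp [hm.neg_pow, Nat.not_odd_iff_even.2 hm]
  · rw [hm.neg_pow, if_pos hm]; ring

/-- For odd `ℓ ≥ 1`, with `w = n + k`, equation (1) holds iff
`w^ℓ = 2 ∑_{m odd, 1 ≤ m ≤ ℓ} C(ℓ,m) w^{ℓ-m} ∑_{i=1}^k i^m`. -/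
theorem eq_iff_odd_case (ℓ k n w : ℕ) (hℓ : 1 ≤ ℓ) (hodd : Odd ℓ)
    (hk : 0 < k) (hn : 0 < n) (hw : w = n + k) :
    (∑ i ∈ Finset.range (k + 1), (n + i) ^ ℓ =
        ∑ i ∈ Finset.Icc (k + 1) (2 * k), (n + i) ^ ℓ) ↔
      w ^ ℓ = 2 * ∑ m ∈ (Finset.range (ℓ + 1)).filter (fun m => Odd m),
        ℓ.choose m * w ^ (ℓ - m) * ∑ i ∈ Finset.Icc 1 k, i ^ m := by
  -- Cast both equalities to ℤ
  rw [← Nat.cast_inj (R := ℤ), ← Nat.cast_inj (R := ℤ)]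
  push_cast
  -- Left sum: reindex as w^ℓ + ∑_{j=1}^k (w-j)^ℓ
  have hA : (∑ i ∈ range (k + 1), ((n : ℤ) + i) ^ ℓ)
      = (w : ℤ) ^ ℓ + ∑ j ∈ Finset.Icc 1 k, ((w : ℤ) - j) ^ ℓ := by
    rw [← Finset.sum_range_reflect (fun i => ((n : ℤ) + i) ^ ℓ) (k + 1)]
    have h1 : ∀ j ∈ range (k + 1),
        ((n : ℤ) + ↑(k + 1 - 1 - j)) ^ ℓ = ((w : ℤ) - j) ^ ℓ := by
      intro j hj
      simp only [mem_range] at hj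
      have h : (↑(k + 1 - 1 - j) : ℤ) = (k : ℤ) - j := by
        have h' : k + 1 - 1 - j = k - j := by omega
        rw [h', Nat.cast_sub (by omega)]
      rw [h, hw]; push_cast; ring_nf
    rw [Finset.sum_congr rfl h1, Finset.sum_range_succ',
      ← Finset.Ico_add_one_right_eq_Icc 1 k, Finset.sum_Ico_eq_sum_range]
    rw [add_comm]
    congr 1
    · refine Finset.sum_congr rfl fun j _ => ?_
      push_cast; ring_nf
  -- Right sum: reindex as ∑_{j=1}^k (w+j)^ℓ
  have hB : (∑ i ∈ Finset.Icc (k + 1) (2 * k), ((n : ℤ) + i) ^ ℓ)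
      = ∑ j ∈ Finset.Icc 1 k, ((w : ℤ) + j) ^ ℓ := by
    rw [← Finset.Ico_add_one_right_eq_Icc (k + 1) (2 * k), Finset.sum_Ico_eq_sum_range,
      ← Finset.Ico_add_one_right_eq_Icc 1 k, Finset.sum_Ico_eq_sum_range]
    have h2 : 2 * k + 1 - (k + 1) = k + 1 - 1 := by omega
    rw [h2]
    refine Finset.sum_congr rfl fun j _ => ?_
    rw [hw]; push_cast; ring_nf
  rw [hA, hB]
  -- Core identity
  have hS : ∑ j ∈ Finset.Icc 1 k, (((w : ℤ) + j) ^ ℓ - ((w : ℤ) - j) ^ ℓ)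
      = 2 * ∑ m ∈ (range (ℓ + 1)).filter (fun m => Odd m),
          (ℓ.choose m : ℤ) * (w : ℤ) ^ (ℓ - m) * ∑ i ∈ Finset.Icc 1 k, (i : ℤ) ^ m := by
    have hk' : ∀ j : ℕ, ((w : ℤ) + j) ^ ℓ - ((w : ℤ) - j) ^ ℓ =
        ∑ m ∈ range (ℓ + 1),
          (if Odd m then 2 * (ℓ.choose m : ℤ) * (w : ℤ) ^ (ℓ - m) * (j : ℤ) ^ m else 0) :=
      fun j => key_pow ℓ (w : ℤ) (j : ℤ)
    rw [Finset.sum_congr rfl fun j _ => hk' j, Finset.sum_comm]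
    rw [Finset.mul_sum, Finset.sum_filter]
    refine Finset.sum_congr rfl fun m _ => ?_
    by_cases hm : Odd m
    · simp only [if_pos hm, Finset.mul_sum]
      exact Finset.sum_congr rfl fun j _ => by ring
    · simp [if_neg hm]
  rw [Finset.sum_sub_distrib] at hS
  constructor
  · intro h; linarith [hS]
  · intro h; linarith [hS]
end

section
/- Let ℓ ≥ 2 be an even integer, and let k, n be positive integers with w = n + k. Then ∑_{i=0}^{k} (n+i)^ℓ = ∑_{i=k+1}^{2k} (n+i)^ℓ holds if and only if w^{ℓ−1} = 2 ∑_{m odd, 1 ≤ m ≤ ℓ} binom(ℓ, m) · w^{ℓ−m−1} · ∑_{i=1}^{k} i^m. -/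
open Finset

lemma key_pow_diff (ℓ : ℕ) (x y : ℤ) :
    (x + y) ^ ℓ - (x - y) ^ ℓ =
      2 * ∑ m ∈ (range (ℓ + 1)).filter (fun m => Odd m),
        (ℓ.choose m : ℤ) * x ^ (ℓ - m) * y ^ m := by
  have h1 : (x + y) ^ ℓ = ∑ m ∈ range (ℓ + 1), y ^ m * x ^ (ℓ - m) * ℓ.choose m := by
    rw [add_comm]; exact add_pow y x ℓ
  have h2 : (x - y) ^ ℓ = ∑ m ∈ range (ℓ + 1), (-y) ^ m * x ^ (ℓ - m) * ℓ.choose m := by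
    rw [sub_eq_add_neg, add_comm]; exact add_pow (-y) x ℓ
  rw [h1, h2, ← Finset.sum_sub_distrib, Finset.mul_sum, Finset.sum_filter]
  refine Finset.sum_congr rfl fun m _ => ?_
  by_cases hm : Odd m
  · rw [if_pos hm, hm.neg_pow]; ring
  · rw [if_neg hm, (Nat.not_odd_iff_even.mp hm).neg_pow]; ring

/-- For even `ℓ ≥ 2`, with `w = n + k`, equation (1) holds iff
`w^{ℓ-1} = 2 ∑_{m odd, 1 ≤ m ≤ ℓ} C(ℓ,m) w^{ℓ-m-1} ∑_{i=1}^k i^m`. -/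
theorem eq_iff_even_case (ℓ k n w : ℕ) (hℓ : 2 ≤ ℓ) (heven : Even ℓ)
    (hk : 0 < k) (hn : 0 < n) (hw : w = n + k) :
    (∑ i ∈ Finset.range (k + 1), (n + i) ^ ℓ =
        ∑ i ∈ Finset.Icc (k + 1) (2 * k), (n + i) ^ ℓ) ↔
      w ^ (ℓ - 1) = 2 * ∑ m ∈ (Finset.range (ℓ + 1)).filter (fun m => Odd m),
        ℓ.choose m * w ^ (ℓ - m - 1) * ∑ i ∈ Finset.Icc 1 k, i ^ m := by
  have hW0 : (w : ℤ) ≠ 0 := by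
    have : 0 < w := by omega
    exact_mod_cast this.ne'
  rw [show (∑ i ∈ Finset.range (k + 1), (n + i) ^ ℓ =
        ∑ i ∈ Finset.Icc (k + 1) (2 * k), (n + i) ^ ℓ) ↔
      ((∑ i ∈ Finset.range (k + 1), (n + i) ^ ℓ : ℕ) : ℤ) =
        ((∑ i ∈ Finset.Icc (k + 1) (2 * k), (n + i) ^ ℓ : ℕ) : ℤ) from Nat.cast_inj.symm]
  rw [show (w ^ (ℓ - 1) = 2 * ∑ m ∈ (Finset.range (ℓ + 1)).filter (fun m => Odd m),
        ℓ.choose m * w ^ (ℓ - m - 1) * ∑ i ∈ Finset.Icc 1 k, i ^ m) ↔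
      ((w ^ (ℓ - 1) : ℕ) : ℤ) = ((2 * ∑ m ∈ (Finset.range (ℓ + 1)).filter (fun m => Odd m),
        ℓ.choose m * w ^ (ℓ - m - 1) * ∑ i ∈ Finset.Icc 1 k, i ^ m : ℕ) : ℤ) from
      Nat.cast_inj.symm]
  push_cast
  -- rewrite LHS sum as reflected sum
  have hA : ∑ i ∈ Finset.range (k + 1), ((n : ℤ) + i) ^ ℓ
      = ∑ i ∈ Finset.range k, ((w : ℤ) - (i + 1)) ^ ℓ + (w : ℤ) ^ ℓ := by
    rw [← Finset.sum_range_reflect (fun i => ((n : ℤ) + i) ^ ℓ) (k + 1),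
      Finset.sum_range_succ']
    congr 1
    · refine Finset.sum_congr rfl fun i hi => ?_
      rw [Finset.mem_range] at hi
      have : (↑(k + 1 - 1 - (i + 1)) : ℤ) = (k : ℤ) - (i + 1) := by
        push_cast [Nat.cast_sub (by omega : i + 1 ≤ k + 1 - 1)]
        omega
      rw [this, hw]; push_cast; ring_nf
    · simp [hw]
  have hB : ∑ i ∈ Finset.Icc (k + 1) (2 * k), ((n : ℤ) + i) ^ ℓ
      = ∑ i ∈ Finset.range k, ((w : ℤ) + (i + 1)) ^ ℓ := by
    rw [← Finset.Ico_add_one_right_eq_Icc, Finset.sum_Ico_eq_sum_range]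
    have hr : 2 * k + 1 - (k + 1) = k := by omega
    rw [hr]
    refine Finset.sum_congr rfl fun i hi => ?_
    rw [hw]; push_cast; ring_nf
  rw [hA, hB]
  have step1 : (∑ i ∈ Finset.range k, ((w : ℤ) - (i + 1)) ^ ℓ + (w : ℤ) ^ ℓ =
      ∑ i ∈ Finset.range k, ((w : ℤ) + (i + 1)) ^ ℓ) ↔
      ((w : ℤ) ^ ℓ = ∑ i ∈ Finset.range k,
        (((w : ℤ) + (i + 1)) ^ ℓ - ((w : ℤ) - (i + 1)) ^ ℓ)) := by
    rw [Finset.sum_sub_distrib]; constructor <;> intro h <;> linarith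
  rw [step1]
  have step2 : ∑ i ∈ Finset.range k,
      (((w : ℤ) + (i + 1)) ^ ℓ - ((w : ℤ) - (i + 1)) ^ ℓ)
      = 2 * ∑ m ∈ (Finset.range (ℓ + 1)).filter (fun m => Odd m),
        (ℓ.choose m : ℤ) * (w : ℤ) ^ (ℓ - m) * ∑ i ∈ Finset.Icc 1 k, (i : ℤ) ^ m := by
    rw [show (∑ i ∈ Finset.range k,
        (((w : ℤ) + (i + 1)) ^ ℓ - ((w : ℤ) - (i + 1)) ^ ℓ)) =
      ∑ i ∈ Finset.range k, 2 * ∑ m ∈ (Finset.range (ℓ + 1)).filter (fun m => Odd m),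
        (ℓ.choose m : ℤ) * (w : ℤ) ^ (ℓ - m) * ((i : ℤ) + 1) ^ m from
      Finset.sum_congr rfl fun i _ => key_pow_diff ℓ (w : ℤ) ((i : ℤ) + 1)]
    rw [← Finset.mul_sum, Finset.sum_comm]
    congr 1
    refine Finset.sum_congr rfl fun m _ => ?_
    rw [← Finset.mul_sum]
    congr 1
    rw [← Finset.Ico_add_one_right_eq_Icc, Finset.sum_Ico_eq_sum_range]
    have : k + 1 - 1 = k := by omega
    rw [this]
    exact Finset.sum_congr rfl fun i _ => by push_cast; ring_nf
  rw [step2]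
  -- now  W^ℓ = 2 ∑ ... W^{ℓ-m} ... ↔ W^{ℓ-1} = 2 ∑ ... W^{ℓ-m-1} ...
  have hL : (w : ℤ) ^ ℓ = (w : ℤ) * (w : ℤ) ^ (ℓ - 1) := by
    rw [← pow_succ']; congr 1; omega
  have hR : (2 : ℤ) * ∑ m ∈ (Finset.range (ℓ + 1)).filter (fun m => Odd m),
        (ℓ.choose m : ℤ) * (w : ℤ) ^ (ℓ - m) * ∑ i ∈ Finset.Icc 1 k, (i : ℤ) ^ m
      = (w : ℤ) * (2 * ∑ m ∈ (Finset.range (ℓ + 1)).filter (fun m => Odd m),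
        (ℓ.choose m : ℤ) * (w : ℤ) ^ (ℓ - m - 1) * ∑ i ∈ Finset.Icc 1 k, (i : ℤ) ^ m) := by
    have hterm : ∑ m ∈ (Finset.range (ℓ + 1)).filter (fun m => Odd m),
        (ℓ.choose m : ℤ) * (w : ℤ) ^ (ℓ - m) * ∑ i ∈ Finset.Icc 1 k, (i : ℤ) ^ m
      = ∑ m ∈ (Finset.range (ℓ + 1)).filter (fun m => Odd m),
        (w : ℤ) * ((ℓ.choose m : ℤ) * (w : ℤ) ^ (ℓ - m - 1) * ∑ i ∈ Finset.Icc 1 k, (i : ℤ) ^ m) := by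
      refine Finset.sum_congr rfl fun m hm => ?_
      simp only [Finset.mem_filter, Finset.mem_range] at hm
      have hmℓ : m < ℓ := by
        rcases Nat.lt_or_ge m ℓ with h | h
        · exact h
        · exfalso
          have : m = ℓ := by omega
          rw [this] at hm
          exact (Nat.not_odd_iff_even.mpr heven) hm.2
      have : (w : ℤ) ^ (ℓ - m) = (w : ℤ) * (w : ℤ) ^ (ℓ - m - 1) := by
        rw [← pow_succ']; congr 1; omega
      rw [this]; ring
    rw [hterm, ← Finset.mul_sum]; ring
  rw [hL, hR, mul_right_inj' hW0]
end

section
/- Let ℓ ≥ 1 and let k, n be positive integers satisfying ∑_{i=0}^{k} (n+i)^ℓ = ∑_{i=k+1}^{2k} (n+i)^ℓ, and set w = n + k. Then the radical of k(k+1) (the product of all primes dividing k(k+1)) divides w; in particular w is even. -/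
/-- If `(k, n)` is a positive solution of equation (1) for some `ℓ ≥ 1` and `w = n + k`,
then the radical of `k(k+1)` divides `w`; in particular `w` is even. -/
theorem radical_dvd_w (ℓ k n w : ℕ) (hℓ : 1 ≤ ℓ) (hk : 0 < k) (hn : 0 < n)
    (hw : w = n + k)
    (heq : ∑ i ∈ Finset.range (k + 1), (n + i) ^ ℓ =
        ∑ i ∈ Finset.Icc (k + 1) (2 * k), (n + i) ^ ℓ) :
    (∏ p ∈ (k * (k + 1)).primeFactors, p) ∣ w ∧ 2 ∣ w := by
  have hIcc : ∑ i ∈ Finset.Icc (k + 1) (2 * k), (n + i) ^ ℓ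
      = ∑ i ∈ Finset.range k, (n + (k + 1 + i)) ^ ℓ := by
    rw [← Finset.Ico_add_one_right_eq_Icc, Finset.sum_Ico_eq_sum_range]
    simp only [show 2 * k + 1 - (k + 1) = k from by omega]
  rw [hIcc] at heq
  have key : ∀ p : ℕ, p.Prime → p ∣ k * (k + 1) → p ∣ w := by
    intro p hp hpd
    haveI := Fact.mk hp
    have hz : ((∑ i ∈ Finset.range (k + 1), (n + i) ^ ℓ : ℕ) : ZMod p)
        = ((∑ i ∈ Finset.range k, (n + (k + 1 + i)) ^ ℓ : ℕ) : ZMod p) := by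
      exact congrArg _ heq
    push_cast at hz
    have hpow : (w : ZMod p) ^ ℓ = 0 := by
      rcases (Nat.Prime.dvd_mul hp).mp hpd with h | h
      · have h0 : (k : ZMod p) = 0 := (ZMod.natCast_eq_zero_iff _ _).mpr h
        have hnw : (n : ZMod p) = (w : ZMod p) := by
          have hww : (w : ZMod p) = (n : ZMod p) + (k : ZMod p) := by
            rw [hw]; push_cast; ring
          rw [hww, h0, add_zero]
        rw [hnw, h0, Finset.sum_range_succ'] at hz
        push_cast at hz
        have hcongr : ∑ i ∈ Finset.range k, ((w : ZMod p) + ((i : ZMod p) + 1)) ^ ℓ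
            = ∑ i ∈ Finset.range k, ((w : ZMod p) + (0 + 1 + (i : ZMod p))) ^ ℓ := by
          apply Finset.sum_congr rfl
          intro i _
          congr 1
          ring
        have hlhs : ((w : ZMod p) + 0) ^ ℓ = (w : ZMod p) ^ ℓ := by
          congr 1; ring
        rw [hcongr, hlhs] at hz
        exact (add_eq_left).mp hz
      · have h0 : ((k : ZMod p) + 1) = 0 := by
          have : ((k + 1 : ℕ) : ZMod p) = 0 := (ZMod.natCast_eq_zero_iff _ _).mpr h
          push_cast at this; exact this
        have hnw : (n : ZMod p) = (w : ZMod p) + 1 := by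
          have hww : (w : ZMod p) = (n : ZMod p) + (k : ZMod p) := by
            rw [hw]; push_cast; ring
          have hk1 : (k : ZMod p) = -1 := by linear_combination h0
          rw [hww, hk1]; ring
        rw [hnw, Finset.sum_range_succ] at hz
        have hcongr : ∑ i ∈ Finset.range k, ((w : ZMod p) + 1 + ((k : ZMod p) + 1 + (i : ZMod p))) ^ ℓ
            = ∑ i ∈ Finset.range k, ((w : ZMod p) + 1 + (i : ZMod p)) ^ ℓ := by
          apply Finset.sum_congr rfl
          intro i _
          congr 1
          linear_combination h0
        have hlast : ((w : ZMod p) + 1 + (k : ZMod p)) ^ ℓ = (w : ZMod p) ^ ℓ := by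
          congr 1
          linear_combination h0
        rw [hcongr, hlast] at hz
        exact (add_eq_left).mp hz
    have hw0 : (w : ZMod p) = 0 :=
      pow_eq_zero_iff (by omega : ℓ ≠ 0) |>.mp hpow
    exact (ZMod.natCast_eq_zero_iff _ _).mp hw0
  refine ⟨Finset.prod_primes_dvd w
      (fun p hp => (Nat.prime_of_mem_primeFactors hp).prime)
      (fun p hp => key p (Nat.prime_of_mem_primeFactors hp) (Nat.dvd_of_mem_primeFactors hp)),
    key 2 Nat.prime_two ?_⟩
  exact (Nat.even_mul_succ_self k).two_dvd
end

section
/- Let ℓ ≥ 2 be even, let k, n be positive integers satisfying ∑_{i=0}^{k} (n+i)^ℓ = ∑_{i=k+1}^{2k} (n+i)^ℓ, and set w = n + k. Then every odd prime p dividing w + 1 satisfies p ≡ 1 (mod 2^{ν₂(ℓ)+1}). -/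
/-- For even `ℓ ≥ 2` and a positive solution `(k, n)` of equation (1) with `w = n + k`,
every odd prime `p` dividing `w + 1` satisfies `p ≡ 1 (mod 2^{ν₂(ℓ)+1})`. -/
theorem odd_prime_dvd_w_add_one (ℓ k n w : ℕ) (hℓ : 2 ≤ ℓ) (heven : Even ℓ)
    (hk : 0 < k) (hn : 0 < n) (hw : w = n + k)
    (heq : ∑ i ∈ Finset.range (k + 1), (n + i) ^ ℓ =
        ∑ i ∈ Finset.Icc (k + 1) (2 * k), (n + i) ^ ℓ) :
    ∀ p : ℕ, p.Prime → Odd p → p ∣ w + 1 →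
      p ≡ 1 [MOD 2 ^ (padicValNat 2 ℓ + 1)] := by
  intro p hp hodd hdvd
  haveI : Fact p.Prime := ⟨hp⟩
  have hℓ0 : ℓ ≠ 0 := by omega
  have hp2 : p ≠ 2 := by
    rintro rfl; exact (Nat.not_odd_iff_even.mpr even_two) hodd
  have hne : (-1 : ZMod p) ≠ 1 := by
    intro h
    have h2 : ((2 : ℕ) : ZMod p) = 0 := by push_cast; linear_combination -h
    have := (ZMod.natCast_eq_zero_iff 2 p).mp h2
    exact hp2 ((Nat.prime_dvd_prime_iff_eq hp Nat.prime_two).mp this)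
  have hwp : (n : ZMod p) = -((k : ZMod p) + 1) := by
    have h0 : ((n + k + 1 : ℕ) : ZMod p) = 0 := by
      rw [ZMod.natCast_eq_zero_iff]
      simpa [hw] using hdvd
    push_cast at h0
    linear_combination h0
  -- cast the equation
  have H : (∑ i ∈ Finset.range (k + 1), ((n : ZMod p) + i) ^ ℓ) =
      ∑ i ∈ Finset.Icc (k + 1) (2 * k), ((n : ZMod p) + i) ^ ℓ := by
    have := congrArg (Nat.cast : ℕ → ZMod p) heq
    push_cast at this
    exact this
  -- rewrite LHS
  have hL : (∑ i ∈ Finset.range (k + 1), ((n : ZMod p) + i) ^ ℓ) =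
      ∑ i ∈ Finset.range (k + 1), ((i : ZMod p) + 1) ^ ℓ := by
    rw [← Finset.sum_range_reflect (fun i => ((n : ZMod p) + i) ^ ℓ) (k + 1)]
    refine Finset.sum_congr rfl fun i hi => ?_
    have hik : i ≤ k := Nat.lt_succ_iff.mp (Finset.mem_range.mp hi)
    have h1 : ((k + 1 - 1 - i : ℕ) : ZMod p) = (k : ZMod p) - i := by
      have : k + 1 - 1 - i = k - i := by omega
      rw [this, Nat.cast_sub hik]
    rw [h1, hwp]
    have : (-((k : ZMod p) + 1) + ((k : ZMod p) - i)) = -((i : ZMod p) + 1) := by ring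
    rw [this, heven.neg_pow]
  -- rewrite RHS
  have hR : (∑ i ∈ Finset.Icc (k + 1) (2 * k), ((n : ZMod p) + i) ^ ℓ) =
      ∑ i ∈ Finset.range k, (i : ZMod p) ^ ℓ := by
    rw [← Finset.Ico_add_one_right_eq_Icc, Finset.sum_Ico_eq_sum_range]
    have hkk : 2 * k + 1 - (k + 1) = k := by omega
    rw [hkk]
    refine Finset.sum_congr rfl fun i _ => ?_
    rw [hwp]
    push_cast
    ring_nf
  -- key: k^ℓ + (k+1)^ℓ = 0
  have key : ((k : ZMod p)) ^ ℓ + ((k : ZMod p) + 1) ^ ℓ = 0 := by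
    have h2 : (∑ i ∈ Finset.range (k + 1), ((i : ZMod p) + 1) ^ ℓ) =
        ∑ i ∈ Finset.range k, (i : ZMod p) ^ ℓ := by rw [← hL, H, hR]
    have h3 : (∑ i ∈ Finset.range (k + 2), (i : ZMod p) ^ ℓ) =
        ∑ i ∈ Finset.range (k + 1), ((i : ZMod p) + 1) ^ ℓ + 0 ^ ℓ := by
      rw [Finset.sum_range_succ']
      congr 1
      · exact Finset.sum_congr rfl fun i _ => by push_cast; ring
      · norm_num
    rw [zero_pow hℓ0, add_zero, h2] at h3
    rw [Finset.sum_range_succ, Finset.sum_range_succ] at h3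
    push_cast at h3
    linear_combination h3
  -- nonvanishing
  have hk1 : ((k : ZMod p) + 1) ≠ 0 := by
    intro h
    have hk0 : (k : ZMod p) = 0 := by
      have : ((k : ZMod p)) ^ ℓ = 0 := by
        rw [h] at key; simpa [zero_pow hℓ0] using key
      exact pow_eq_zero_iff hℓ0 |>.mp this
    rw [hk0] at h
    simpa using h
  have hk0 : (k : ZMod p) ≠ 0 := by
    intro h
    apply hk1
    have : ((k : ZMod p) + 1) ^ ℓ = 0 := by rw [h] at key; simpa [zero_pow hℓ0] using key
    exact pow_eq_zero_iff hℓ0 |>.mp this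
  -- t^ℓ = -1
  set t : ZMod p := (k : ZMod p) / ((k : ZMod p) + 1) with ht
  have htl : t ^ ℓ = -1 := by
    rw [ht, div_pow, div_eq_iff (pow_ne_zero ℓ hk1)]
    linear_combination key
  have ht0 : t ≠ 0 := by
    intro h
    rw [h, zero_pow hℓ0] at htl
    exact hne (by linear_combination -2 * htl)
  -- order argument
  set a := padicValNat 2 ℓ with ha
  obtain ⟨m, hm⟩ : 2 ^ a ∣ ℓ := pow_padicValNat_dvd
  set s : ZMod p := t ^ m with hs
  have hsa : s ^ (2 ^ a) = -1 := by
    rw [hs, ← pow_mul, mul_comm, ← hm, htl]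
  have hsa1 : s ^ (2 ^ (a + 1)) = 1 := by
    rw [pow_succ, pow_mul, hsa]; ring
  have hdvd1 : orderOf s ∣ 2 ^ (a + 1) := orderOf_dvd_of_pow_eq_one hsa1
  obtain ⟨b, hb, hsb⟩ := (Nat.dvd_prime_pow Nat.prime_two).mp hdvd1
  have hba : b = a + 1 := by
    by_contra hba
    have hble : b ≤ a := by omega
    have : s ^ (2 ^ a) = 1 := by
      apply orderOf_dvd_iff_pow_eq_one.mp
      rw [hsb]
      exact pow_dvd_pow 2 hble
    rw [hsa] at this
    exact hne this
  have hs0 : s ≠ 0 := pow_ne_zero m ht0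
  have hord : orderOf s ∣ p - 1 :=
    orderOf_dvd_of_pow_eq_one (ZMod.pow_card_sub_one_eq_one hs0)
  have hfin : 2 ^ (a + 1) ∣ p - 1 := by rw [← hba, ← hsb]; exact hord
  have hp1 : 1 ≤ p := hp.one_lt.le
  exact ((Nat.modEq_iff_dvd' hp1).mpr hfin).symm
end

section
/- Let ℓ ≥ 1 and let k, n be positive integers satisfying ∑_{i=0}^{k} (n+i)^ℓ = ∑_{i=k+1}^{2k} (n+i)^ℓ, and set w = n + k, K = k(k+1), a = (ℓ−1)(ℓ−2)/(12ℓ), b = (ℓ−1)²(ℓ−2)²/(72ℓ³). Then ℓK + a − b/K ≤ w ≤ ℓK + a (inequalities of real numbers). -/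
open Finset

lemma cast_choose_two' (n : ℕ) : (n.choose 2 : ℝ) * 2 = n * (n - 1) := by
  induction n with
  | zero => simp
  | succ n ih =>
    rw [Nat.choose_succ_succ, Nat.choose_one_right]
    push_cast
    push_cast at ih
    nlinarith [ih]

lemma cast_choose_three' (n : ℕ) : (n.choose 3 : ℝ) * 6 = n * (n - 1) * (n - 2) := by
  induction n with
  | zero => simp
  | succ n ih =>
    rw [Nat.choose_succ_succ]
    push_cast
    push_cast at ih
    nlinarith [ih, cast_choose_two' n]

lemma sumP1 (k : ℕ) : ∑ j ∈ range k, ((j : ℝ) + 1) = k * (k + 1) / 2 := by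
  induction k with
  | zero => simp
  | succ k ih => rw [Finset.sum_range_succ, ih]; push_cast; ring

lemma sumP3 (k : ℕ) : ∑ j ∈ range k, ((j : ℝ) + 1) ^ 3 = ((k : ℝ) * (k + 1)) ^ 2 / 4 := by
  induction k with
  | zero => simp
  | succ k ih => rw [Finset.sum_range_succ, ih]; push_cast; ring

lemma sumP5 (k : ℕ) : (∑ j ∈ range k, ((j : ℝ) + 1) ^ 5) * 6 ≤ ((k : ℝ) * (k + 1)) ^ 3 := by
  induction k with
  | zero => simp
  | succ k ih =>
    rw [Finset.sum_range_succ]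
    push_cast
    have e : (((k:ℝ)+1)*((k:ℝ)+1+1))^3 = ((k:ℝ)*((k:ℝ)+1))^3 + ((k:ℝ)+1)^3*(6*(k:ℝ)^2+12*(k:ℝ)+8) := by ring
    have h2 : ((k:ℝ)+1)^3*(6*(k:ℝ)^2+12*(k:ℝ)+8) - ((k:ℝ)+1)^5*6 = 2*((k:ℝ)+1)^3 := by ring
    have h3 : (0:ℝ) ≤ ((k:ℝ)+1)^3 := by positivity
    linarith [ih]

lemma sumPm (k m : ℕ) : ∑ j ∈ range k, ((j : ℝ) + 1) ^ (m + 3) ≤ (k : ℝ) ^ m * (((k : ℝ) * (k + 1)) ^ 2 / 4) := by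
  calc ∑ j ∈ range k, ((j : ℝ) + 1) ^ (m + 3)
      ≤ ∑ j ∈ range k, (k : ℝ) ^ m * ((j : ℝ) + 1) ^ 3 := by
        apply Finset.sum_le_sum
        intro j hj
        rw [pow_add]
        apply mul_le_mul_of_nonneg_right _ (by positivity)
        apply pow_le_pow_left₀ (by positivity)
        have := Finset.mem_range.1 hj
        have : (j : ℝ) + 1 ≤ k := by exact_mod_cast Nat.succ_le_of_lt this
        linarith
    _ = (k : ℝ) ^ m * (((k : ℝ) * (k + 1)) ^ 2 / 4) := by rw [← Finset.mul_sum, sumP3]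
open Finset

lemma binom_diff (x y : ℝ) (ℓ : ℕ) :
    (x + y) ^ ℓ - (x - y) ^ ℓ =
      ∑ m ∈ range (ℓ + 1), (1 - (-1 : ℝ) ^ m) * (ℓ.choose m) * y ^ m * x ^ (ℓ - m) := by
  have h1 : (x + y) ^ ℓ = ∑ m ∈ range (ℓ + 1), x ^ m * y ^ (ℓ - m) * (ℓ.choose m) :=
    add_pow x y ℓ
  have h2 : (x - y) ^ ℓ = ∑ m ∈ range (ℓ + 1), x ^ m * ((-1 : ℝ) ^ (ℓ - m) * y ^ (ℓ - m)) * (ℓ.choose m) := by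
    have := add_pow x (-y) ℓ
    simpa [neg_pow y, sub_eq_add_neg] using this
  rw [h1, h2, ← Finset.sum_sub_distrib]
  rw [← Finset.sum_range_reflect (fun m => (1 - (-1 : ℝ) ^ m) * (ℓ.choose m) * y ^ m * x ^ (ℓ - m)) (ℓ + 1)]
  apply Finset.sum_congr rfl
  intro m hm
  have hm' : m ≤ ℓ := Nat.lt_succ_iff.mp (Finset.mem_range.mp hm)
  have e1 : ℓ + 1 - 1 - m = ℓ - m := by omega
  have e2 : ℓ - (ℓ - m) = m := by omega
  rw [e1, Nat.choose_symm hm', e2]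
  ring

lemma key_identity (ℓ k n w : ℕ) (hw : w = n + k)
    (heq : ∑ i ∈ Finset.range (k + 1), (n + i) ^ ℓ =
        ∑ i ∈ Finset.Icc (k + 1) (2 * k), (n + i) ^ ℓ) :
    (w : ℝ) ^ ℓ = ∑ m ∈ range (ℓ + 1),
      (1 - (-1 : ℝ) ^ m) * (ℓ.choose m) * (∑ j ∈ range k, ((j : ℝ) + 1) ^ m) * (w : ℝ) ^ (ℓ - m) := by
  have heqR : ∑ i ∈ Finset.range (k + 1), ((n : ℝ) + i) ^ ℓ =
      ∑ i ∈ Finset.Icc (k + 1) (2 * k), ((n : ℝ) + i) ^ ℓ := by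
    exact_mod_cast heq
  have hL : ∑ i ∈ Finset.range (k + 1), ((n : ℝ) + i) ^ ℓ =
      (∑ j ∈ range k, ((w : ℝ) - ((j : ℝ) + 1)) ^ ℓ) + (w : ℝ) ^ ℓ := by
    rw [Finset.sum_range_succ]
    congr 1
    · rw [← Finset.sum_range_reflect (fun i => ((n : ℝ) + i) ^ ℓ) k]
      apply Finset.sum_congr rfl
      intro j hj
      have hj' : j < k := Finset.mem_range.mp hj
      have : ((k - 1 - j : ℕ) : ℝ) = (k : ℝ) - 1 - j := by
        have : (k : ℤ) - 1 - j = ((k - 1 - j : ℕ) : ℤ) := by omega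
        exact_mod_cast this.symm
      rw [this, hw]
      push_cast
      ring_nf
    · rw [hw]; push_cast; ring_nf
  have hR : ∑ i ∈ Finset.Icc (k + 1) (2 * k), ((n : ℝ) + i) ^ ℓ =
      ∑ j ∈ range k, ((w : ℝ) + ((j : ℝ) + 1)) ^ ℓ := by
    rw [← Finset.Ico_add_one_right_eq_Icc, Finset.sum_Ico_eq_sum_range]
    have hc : 2 * k + 1 - (k + 1) = k := by omega
    rw [hc]
    apply Finset.sum_congr rfl
    intro j _
    rw [hw]
    push_cast
    ring_nf
  have hD : (w : ℝ) ^ ℓ = ∑ j ∈ range k,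
      (((w : ℝ) + ((j : ℝ) + 1)) ^ ℓ - ((w : ℝ) - ((j : ℝ) + 1)) ^ ℓ) := by
    rw [Finset.sum_sub_distrib]
    rw [hL, hR] at heqR
    linarith
  rw [hD]
  have : ∀ j ∈ range k, ((w : ℝ) + ((j : ℝ) + 1)) ^ ℓ - ((w : ℝ) - ((j : ℝ) + 1)) ^ ℓ
      = ∑ m ∈ range (ℓ + 1), (1 - (-1 : ℝ) ^ m) * (ℓ.choose m) * ((j : ℝ) + 1) ^ m * (w : ℝ) ^ (ℓ - m) :=
    fun j _ => binom_diff _ _ ℓ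
  rw [Finset.sum_congr rfl this, Finset.sum_comm]
  apply Finset.sum_congr rfl
  intro m _
  rw [Finset.mul_sum, Finset.sum_mul]

lemma desc_le_aux (ℓ t : ℕ) : ℓ.descFactorial (3 + t) ≤ ℓ * (ℓ - 1) * (ℓ - 2) * ℓ ^ t := by
  induction t with
  | zero =>
    simp [Nat.descFactorial]
    ring_nf
    exact le_refl _
  | succ t ih =>
    have : 3 + (t + 1) = (3 + t) + 1 := by omega
    rw [this, Nat.descFactorial_succ]
    calc (ℓ - (3 + t)) * ℓ.descFactorial (3 + t)
        ≤ ℓ * (ℓ * (ℓ - 1) * (ℓ - 2) * ℓ ^ t) := Nat.mul_le_mul (Nat.sub_le _ _) ih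
      _ = ℓ * (ℓ - 1) * (ℓ - 2) * ℓ ^ (t + 1) := by ring

lemma fact_ge_aux (t : ℕ) : 5040 * 2 ^ t ≤ Nat.factorial (7 + t) := by
  induction t with
  | zero => simp [Nat.factorial]
  | succ t ih =>
    have : 7 + (t + 1) = (7 + t) + 1 := by omega
    rw [this, Nat.factorial_succ]
    calc 5040 * 2 ^ (t + 1) = 2 * (5040 * 2 ^ t) := by ring
      _ ≤ (7 + t + 1) * Nat.factorial (7 + t) := Nat.mul_le_mul (by omega) ih

lemma num_upper (L K rk a : ℝ) (hL : 3 ≤ L) (hrk : 1 ≤ rk) (hK : K = rk * (rk + 1))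
    (ha : a = (L - 1) * (L - 2) / (12 * L)) :
    a * (L * K) ^ 2 / (L * K + a) ^ 2 + (L - 1) * (L - 2) * (L - 3) * (L - 4) / (360 * L ^ 3 * K)
      + 2 * ((L - 1) * (L - 2) / (10080 * L * rk ^ 4)) ≤ a := by
  have hK2 : 2 ≤ K := by nlinarith
  have hKpos : 0 < K := by linarith
  have hLpos : 0 < L := by linarith
  have h12 : 0 < (L - 1) * (L - 2) := by nlinarith
  have hapos : 0 < a := by rw [ha]; exact div_pos h12 (by positivity)
  have haK : a ≤ L * K := by
    rw [ha, div_le_iff₀ (by positivity)]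
    nlinarith [mul_le_mul_of_nonneg_left hK2 (by positivity : (0:ℝ) ≤ 12 * L ^ 2)]
  set T := L * K with hT
  have hTpos : 0 < T := by positivity
  have hTa : 0 < (T + a) ^ 2 := by positivity
  have s1 : a ^ 2 / (2 * T) ≤ a - a * T ^ 2 / (T + a) ^ 2 := by
    have key : a - a * T ^ 2 / (T + a) ^ 2 = a * (2 * a * T + a ^ 2) / (T + a) ^ 2 := by
      field_simp
      ring
    rw [key, div_le_div_iff₀ (by positivity) hTa]
    have ha2T2 : a ^ 2 ≤ T ^ 2 := by nlinarith
    nlinarith [mul_le_mul_of_nonneg_left ha2T2 (sq_nonneg a)]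
  have h1 : 2 * ((L - 1) * (L - 2) / (10080 * L * rk ^ 4)) ≤ (L - 1) * (L - 2) / (2520 * L * K) := by
    rw [← mul_div_assoc, div_le_div_iff₀ (by positivity) (by positivity)]
    have : K ≤ 2 * rk ^ 4 := by nlinarith [sq_nonneg (rk - 1), sq_nonneg rk]
    nlinarith [mul_le_mul_of_nonneg_left this (le_of_lt (mul_pos h12 (mul_pos hLpos hLpos))),
      mul_pos hLpos hKpos, mul_pos h12 hLpos]
  have h2 : (L - 1) * (L - 2) * (L - 3) * (L - 4) / (360 * L ^ 3 * K)
      + (L - 1) * (L - 2) / (2520 * L * K) ≤ a ^ 2 / (2 * T) := by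
    have e1 : (L - 1) * (L - 2) * (L - 3) * (L - 4) / (360 * L ^ 3 * K)
        + (L - 1) * (L - 2) / (2520 * L * K)
        = (L - 1) * (L - 2) * (7 * (L - 3) * (L - 4) + L ^ 2) / (2520 * L ^ 3 * K) := by
      field_simp
      ring
    have e2 : a ^ 2 / (2 * T) = (L - 1) * (L - 2) * ((L - 1) * (L - 2) * (35 / 4)) / (2520 * L ^ 3 * K) := by
      rw [ha, hT]
      field_simp
      ring
    rw [e1, e2, div_le_div_iff_of_pos_right (by positivity : (0:ℝ) < 2520 * L ^ 3 * K)]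
    have inner : 7 * (L - 3) * (L - 4) + L ^ 2 ≤ (L - 1) * (L - 2) * (35 / 4) := by nlinarith
    calc (L - 1) * (L - 2) * (7 * (L - 3) * (L - 4) + L ^ 2)
        ≤ (L - 1) * (L - 2) * ((L - 1) * (L - 2) * (35 / 4)) :=
          mul_le_mul_of_nonneg_left inner h12.le
      _ = _ := rfl
  linarith

lemma num_lower (L K a b : ℝ) (hL : 3 ≤ L) (hK2 : 2 ≤ K)
    (ha : a = (L - 1) * (L - 2) / (12 * L))
    (hb : b = (L - 1) ^ 2 * (L - 2) ^ 2 / (72 * L ^ 3)) :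
    a - b / K ≤ a * (L * K) ^ 2 / (L * K + a) ^ 2 := by
  have hKpos : 0 < K := by linarith
  have hLpos : 0 < L := by linarith
  have h12 : 0 < (L - 1) * (L - 2) := by nlinarith
  have hapos : 0 < a := by rw [ha]; exact div_pos h12 (by positivity)
  set T := L * K with hT
  have hTpos : 0 < T := by positivity
  have hbK : b / K = 2 * a ^ 2 / T := by
    rw [hb, ha, hT]
    field_simp
    ring
  rw [hbK]
  have e : a - 2 * a ^ 2 / T = (a * T - 2 * a ^ 2) / T := by field_simp
  rw [e, div_le_div_iff₀ hTpos (by positivity)]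
  nlinarith [mul_pos hapos hTpos, mul_pos (mul_pos hapos hapos) hTpos, sq_nonneg a,
    mul_pos (mul_pos (mul_pos hapos hapos) hapos) hTpos]
lemma geom_half (N : ℕ) : ∑ i ∈ Finset.range N, (1/2:ℝ)^i ≤ 2 := by
  have h := geom_sum_eq (show (1/2:ℝ) ≠ 1 by norm_num) N
  rw [h, div_le_iff_of_neg (by norm_num : (1/2:ℝ) - 1 < 0)]
  have : (0:ℝ) ≤ (1/2:ℝ)^N := by positivity
  linarith
set_option maxHeartbeats 3200000 in
/-- If `(k, n)` is a positive solution of equation (1) for `ℓ ≥ 1` and `w = n + k`,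
`K = k(k+1)`, `a = (ℓ-1)(ℓ-2)/(12ℓ)`, `b = (ℓ-1)²(ℓ-2)²/(72ℓ³)`, then
`ℓK + a - b/K ≤ w ≤ ℓK + a` as real numbers. -/
theorem w_bounds (ℓ k n w : ℕ) (hℓ : 1 ≤ ℓ) (hk : 0 < k) (hn : 0 < n)
    (hw : w = n + k)
    (heq : ∑ i ∈ Finset.range (k + 1), (n + i) ^ ℓ =
        ∑ i ∈ Finset.Icc (k + 1) (2 * k), (n + i) ^ ℓ)
    (K a b : ℝ) (hK : K = (k : ℝ) * ((k : ℝ) + 1))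
    (ha : a = ((ℓ : ℝ) - 1) * ((ℓ : ℝ) - 2) / (12 * (ℓ : ℝ)))
    (hb : b = ((ℓ : ℝ) - 1) ^ 2 * ((ℓ : ℝ) - 2) ^ 2 / (72 * (ℓ : ℝ) ^ 3)) :
    (ℓ : ℝ) * K + a - b / K ≤ (w : ℝ) ∧ (w : ℝ) ≤ (ℓ : ℝ) * K + a := by
  have hw0 : 0 < w := by omega
  have hx0 : (0:ℝ) < (w:ℝ) := by exact_mod_cast hw0
  have hrk1 : (1:ℝ) ≤ (k:ℝ) := by exact_mod_cast hk
  have hK2 : (2:ℝ) ≤ K := by rw [hK]; nlinarith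
  have hKpos : (0:ℝ) < K := by linarith
  rcases le_or_gt ℓ 2 with hℓ2 | hℓ3
  · -- small cases ℓ = 1, 2
    interval_cases ℓ
    · have hid := key_identity 1 k n w hw heq
      have hs := sumP1 k
      rw [Finset.sum_range_succ, Finset.sum_range_succ, Finset.sum_range_zero] at hid
      norm_num at hid ha hb
      constructor
      · rw [hK, ha, hb]; norm_num; nlinarith [hid, hs]
      · rw [hK, ha]; norm_num; nlinarith [hid, hs]
    · have hid := key_identity 2 k n w hw heq
      have hs := sumP1 k
      rw [Finset.sum_range_succ, Finset.sum_range_succ, Finset.sum_range_succ,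
        Finset.sum_range_zero] at hid
      norm_num at hid ha hb
      have hx : (w:ℝ) = 2 * ((k:ℝ) * ((k:ℝ)+1)) := by
        have h2 : (w:ℝ) * (w:ℝ) = (2 * ((k:ℝ) * ((k:ℝ)+1))) * (w:ℝ) := by nlinarith [hid, hs]
        exact mul_right_cancel₀ hx0.ne' h2
      constructor
      · rw [hK, ha, hb]; norm_num; nlinarith [hx]
      · rw [hK, ha]; norm_num; nlinarith [hx]
  · -- main case ℓ ≥ 3
    have hℓ3' : (3:ℝ) ≤ (ℓ:ℝ) := by exact_mod_cast hℓ3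
    set L : ℝ := (ℓ:ℝ) with hLdef
    set x : ℝ := (w:ℝ) with hxdef
    set P : ℕ → ℝ := fun m => ∑ j ∈ Finset.range k, ((j:ℝ)+1)^m with hP
    set f : ℕ → ℝ := fun m => (1 - (-1:ℝ)^m) * (ℓ.choose m : ℝ) * P m * x^(ℓ - m) with hf
    have hid : x ^ ℓ = ∑ m ∈ Finset.range (ℓ+1), f m := key_identity ℓ k n w hw heq
    have hPdef : ∀ m, P m = ∑ j ∈ Finset.range k, ((j:ℝ)+1)^m := fun m => rfl
    clear_value f P x L
    have hLpos : (0:ℝ) < L := by linarith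
    have hTpos : (0:ℝ) < L * K := by positivity
    have h12 : (0:ℝ) < (L-1)*(L-2) := by nlinarith
    have hapos : (0:ℝ) < a := by rw [ha]; exact div_pos h12 (by positivity)
    have hone : ∀ m : ℕ, (0:ℝ) ≤ 1 - (-1:ℝ)^m ∧ 1 - (-1:ℝ)^m ≤ 2 := by
      intro m
      rcases neg_one_pow_eq_or ℝ m with h | h <;> rw [h] <;> norm_num
    have hPnn : ∀ m, 0 ≤ P m := by
      intro m
      rw [hPdef]
      apply Finset.sum_nonneg
      intro j _
      positivity
    have hfnn : ∀ m, 0 ≤ f m := by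
      intro m
      rw [hf]
      exact mul_nonneg (mul_nonneg (mul_nonneg (hone m).1 (Nat.cast_nonneg _)) (hPnn m))
        (pow_nonneg hx0.le _)
    have h13sub : ({1, 3} : Finset ℕ) ⊆ Finset.range (ℓ+1) := by
      intro m hm
      simp only [Finset.mem_insert, Finset.mem_singleton] at hm
      simp only [Finset.mem_range]
      omega
    have hsplit : x ^ ℓ = f 1 + f 3 + ∑ m ∈ Finset.range (ℓ+1) \ {1, 3}, f m := by
      rw [hid, ← Finset.sum_sdiff h13sub, Finset.sum_pair (by norm_num : (1:ℕ) ≠ 3)]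
      ring
    have hf1 : f 1 = L * K * x ^ (ℓ - 1) := by
      simp only [hf, hPdef, pow_one]
      rw [sumP1, hK, Nat.choose_one_right]
      push_cast
      rw [hLdef]
      ring
    have hch3 : (ℓ.choose 3 : ℝ) = L * (L-1) * (L-2) / 6 := by
      have := cast_choose_three' ℓ
      rw [← hLdef] at this
      linarith
    have hf3 : f 3 = a * L^2 * K^2 * x ^ (ℓ - 3) := by
      simp only [hf, hPdef]
      rw [sumP3, hch3, ha, hK]
      field_simp
      ring
    have hxpow : x ^ ℓ = x ^ (ℓ - 1) * x := by
      rw [← pow_succ]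
      congr 1
      omega
    have hxp1 : (0:ℝ) < x ^ (ℓ - 1) := pow_pos hx0 _
    have hsumnn : (0:ℝ) ≤ ∑ m ∈ Finset.range (ℓ+1) \ {1, 3}, f m :=
      Finset.sum_nonneg fun m _ => hfnn m
    have hf3nn : (0:ℝ) ≤ f 3 := hfnn 3
    have hxT : L * K ≤ x := by
      have h0 : L * K * x ^ (ℓ - 1) ≤ x ^ (ℓ - 1) * x := by
        rw [← hxpow, hsplit]
        linarith [hf1]
      exact le_of_mul_le_mul_right (by linarith [h0]) hxp1
    have hE5nn : (0:ℝ) ≤ (L-1)*(L-2)*(L-3)*(L-4) := by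
      have hor : ℓ = 3 ∨ 4 ≤ ℓ := by omega
      rcases hor with h | h
      · rw [hLdef]
        subst h
        norm_num
      · have h4 : (4:ℝ) ≤ L := by rw [hLdef]; exact_mod_cast h
        apply mul_nonneg (mul_nonneg (mul_nonneg _ _) _) _ <;> linarith
    obtain ⟨E5, hE5⟩ : ∃ E5 : ℝ, E5 = (L-1)*(L-2)*(L-3)*(L-4) / (360 * L^3 * K) := ⟨_, rfl⟩
    obtain ⟨C0, hC0⟩ : ∃ C0 : ℝ, C0 = (L-1)*(L-2) / (10080 * L * (k:ℝ)^4) := ⟨_, rfl⟩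
    have hE5nn' : 0 ≤ E5 := by rw [hE5]; exact div_nonneg hE5nn (by positivity)
    have hC0nn : 0 ≤ C0 := by rw [hC0]; exact div_nonneg h12.le (by positivity)
    have hxe3 : x^(ℓ-1) = x^(ℓ-3)*x^2 := by
      rw [← pow_add]
      congr 1
      omega
    have hrem : ∑ m ∈ Finset.range (ℓ+1) \ {1, 3}, f m ≤ (E5 + 2 * C0) * x ^ (ℓ - 1) := by
      rw [← Finset.sum_filter_add_sum_filter_not (Finset.range (ℓ+1) \ {1, 3}) (fun m => m < 7) f]
      have hpart1 : ∑ m ∈ (Finset.range (ℓ+1) \ {1, 3}).filter (fun m => m < 7), f m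
          ≤ E5 * x ^ (ℓ - 1) := by
        calc ∑ m ∈ (Finset.range (ℓ+1) \ {1, 3}).filter (fun m => m < 7), f m
            ≤ ∑ m ∈ (Finset.range (ℓ+1) \ {1, 3}).filter (fun m => m < 7),
              (if m = 5 then E5 * x ^ (ℓ - 1) else 0) := by
              apply Finset.sum_le_sum
              intro m hm
              simp only [Finset.mem_filter, Finset.mem_sdiff, Finset.mem_range,
                Finset.mem_insert, Finset.mem_singleton, not_or] at hm
              obtain ⟨⟨hmr, hm1, hm3⟩, hm7⟩ := hm
              interval_cases m
              · simp only [hf]; norm_num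
              · exact absurd rfl hm1
              · simp only [hf]; norm_num
              · exact absurd rfl hm3
              · simp only [hf]; norm_num
              · -- m = 5
                rw [if_pos rfl]
                have h5ℓ : 5 ≤ ℓ := by omega
                have hch5 : (ℓ.choose 5 : ℝ) * 120 = L*(L-1)*(L-2)*(L-3)*(L-4) := by
                  have h1 : ℓ.descFactorial 5 = 120 * ℓ.choose 5 := by
                    have := Nat.descFactorial_eq_factorial_mul_choose ℓ 5
                    simpa [Nat.factorial] using this
                  have h2 : ℓ.descFactorial 5 = (ℓ-4)*((ℓ-3)*((ℓ-2)*((ℓ-1)*ℓ))) := by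
                    simp [Nat.descFactorial]
                  have h3 : ((ℓ-4)*((ℓ-3)*((ℓ-2)*((ℓ-1)*ℓ))) : ℕ) = (120 * ℓ.choose 5 : ℕ) := by
                    rw [← h2, h1]
                  have h4 := congrArg (fun z : ℕ => (z : ℝ)) h3
                  push_cast [Nat.cast_sub (show 4 ≤ ℓ by omega), Nat.cast_sub (show 3 ≤ ℓ by omega),
                    Nat.cast_sub (show 2 ≤ ℓ by omega), Nat.cast_sub (show 1 ≤ ℓ by omega)] at h4
                  rw [← hLdef] at h4
                  linarith
                have hP5 : P 5 ≤ K^3 / 6 := by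
                  have h6 := sumP5 k
                  rw [← hK] at h6
                  rw [hPdef]
                  linarith
                have hxe : x ^ (ℓ - 1) = x ^ (ℓ - 5) * x ^ 4 := by
                  rw [← pow_add]
                  congr 1
                  omega
                have hx4 : (L*K)^4 ≤ x^4 := pow_le_pow_left₀ hTpos.le hxT 4
                have hf5 : f 5 = 2 * (ℓ.choose 5 : ℝ) * P 5 * x ^ (ℓ - 5) := by
                  simp only [hf]
                  norm_num
                rw [hf5]
                calc 2 * (ℓ.choose 5 : ℝ) * P 5 * x ^ (ℓ - 5)
                    ≤ 2 * (ℓ.choose 5 : ℝ) * (K^3/6) * x ^ (ℓ - 5) := by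
                      apply mul_le_mul_of_nonneg_right _ (by positivity)
                      exact mul_le_mul_of_nonneg_left hP5 (by positivity)
                  _ = E5 * (L*K)^4 * x ^ (ℓ - 5) := by
                      rw [hE5, show (ℓ.choose 5 : ℝ) = L*(L-1)*(L-2)*(L-3)*(L-4)/120 by linarith]
                      field_simp
                      ring
                  _ ≤ E5 * x^4 * x ^ (ℓ - 5) := by
                      apply mul_le_mul_of_nonneg_right _ (by positivity)
                      exact mul_le_mul_of_nonneg_left hx4 hE5nn'
                  _ = E5 * x ^ (ℓ - 1) := by rw [hxe]; ring
              · simp only [hf]; norm_num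
          _ ≤ E5 * x ^ (ℓ - 1) := by
              rw [Finset.sum_ite_eq' _ 5 (fun _ => E5 * x ^ (ℓ - 1))]
              split_ifs
              · exact le_refl _
              · exact mul_nonneg hE5nn' (by positivity)
      have hpart2 : ∑ m ∈ (Finset.range (ℓ+1) \ {1, 3}).filter (fun m => ¬ m < 7), f m
          ≤ 2 * C0 * x ^ (ℓ - 1) := by
        have hsub : (Finset.range (ℓ+1) \ {1, 3}).filter (fun m => ¬ m < 7)
            ⊆ Finset.Ico 7 (ℓ+1) := by
          intro m hm
          simp only [Finset.mem_filter, Finset.mem_sdiff, Finset.mem_range, not_lt,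
            Finset.mem_insert, Finset.mem_singleton, not_or] at hm
          simp only [Finset.mem_Ico]
          omega
        have hterm : ∀ m ∈ Finset.Ico 7 (ℓ+1), f m ≤ C0 * (1/2:ℝ)^(m-7) * x^(ℓ-1) := by
          intro m hm
          simp only [Finset.mem_Ico] at hm
          obtain ⟨t, rfl⟩ : ∃ t, m = 7 + t := ⟨m - 7, by omega⟩
          have htℓ : 7 + t ≤ ℓ := by omega
          rw [show 7 + t - 7 = t from by omega]
          have hfac : (5040:ℝ) * 2^t ≤ ((7+t).factorial : ℝ) := by exact_mod_cast fact_ge_aux t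
          have hchnn : (0:ℝ) ≤ (ℓ.choose (7+t):ℝ) := Nat.cast_nonneg _
          have hdesc : ((7+t).factorial : ℝ) * (ℓ.choose (7+t):ℝ) ≤ (L-1)*(L-2)*L^(t+5) := by
            have h1 : ℓ.descFactorial (7+t) = (7+t).factorial * ℓ.choose (7+t) :=
              Nat.descFactorial_eq_factorial_mul_choose ℓ (7+t)
            have h2 : ℓ.descFactorial (7+t) ≤ ℓ*(ℓ-1)*(ℓ-2)*ℓ^(t+4) := by
              have h := desc_le_aux ℓ (t+4)
              rwa [show 3+(t+4) = 7+t from by omega] at h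
            have h3 : ((7+t).factorial * ℓ.choose (7+t) : ℕ) ≤ (ℓ*(ℓ-1)*(ℓ-2)*ℓ^(t+4) : ℕ) :=
              h1 ▸ h2
            have h4 : (((7+t).factorial * ℓ.choose (7+t) : ℕ) : ℝ)
                ≤ ((ℓ*(ℓ-1)*(ℓ-2)*ℓ^(t+4) : ℕ) : ℝ) := by exact_mod_cast h3
            push_cast [Nat.cast_sub (show 1 ≤ ℓ by omega),
              Nat.cast_sub (show 2 ≤ ℓ by omega)] at h4
            rw [← hLdef] at h4
            calc ((7+t).factorial : ℝ) * (ℓ.choose (7+t):ℝ) ≤ L*(L-1)*(L-2)*L^(t+4) := h4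
              _ = (L-1)*(L-2)*L^(t+5) := by rw [pow_succ]; ring
          have hch : (ℓ.choose (7+t):ℝ) * (5040 * 2^t) ≤ (L-1)*(L-2)*L^(t+5) := by
            calc (ℓ.choose (7+t):ℝ) * (5040 * 2^t)
                ≤ (ℓ.choose (7+t):ℝ) * ((7+t).factorial : ℝ) :=
                  mul_le_mul_of_nonneg_left hfac hchnn
              _ = ((7+t).factorial : ℝ) * (ℓ.choose (7+t):ℝ) := by ring
              _ ≤ _ := hdesc
          have hPm : P (7+t) ≤ (k:ℝ)^(t+4) * (K^2/4) := by
            have h := sumPm k (t+4)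
            rw [← hK] at h
            rw [hPdef]
            rwa [show (t+4)+3 = 7+t from by omega] at h
          have hkK : ((k:ℝ)^(t+4) * K^2) * (k:ℝ)^4 ≤ K^(t+6) := by
            have h1 : ((k:ℝ)^2)^(t+4) ≤ K^(t+4) := by
              apply pow_le_pow_left₀ (by positivity)
              rw [hK]; nlinarith
            have h2 : (k:ℝ)^(t+8) ≤ ((k:ℝ)^2)^(t+4) := by
              rw [← pow_mul]
              exact pow_le_pow_right₀ hrk1 (by omega)
            calc ((k:ℝ)^(t+4) * K^2) * (k:ℝ)^4 = (k:ℝ)^(t+8) * K^2 := by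
                  rw [show t+8 = (t+4)+4 from rfl, pow_add]; ring
              _ ≤ K^(t+4) * K^2 := by
                  apply mul_le_mul_of_nonneg_right _ (by positivity)
                  exact le_trans h2 h1
              _ = K^(t+6) := by rw [← pow_add]
          have hcoefnn : (0:ℝ) ≤ (L-1)*(L-2)*L^(t+5)/(10080*2^t) :=
            div_nonneg (mul_nonneg h12.le (by positivity)) (by positivity)
          have hcoef : 2 * (ℓ.choose (7+t):ℝ) * ((k:ℝ)^(t+4) * (K^2/4))
              ≤ C0 * (1/2:ℝ)^t * (L*K)^(t+6) := by
            have hch' : (ℓ.choose (7+t):ℝ) ≤ (L-1)*(L-2)*L^(t+5) / (5040*2^t) := by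
              rw [le_div_iff₀ (by positivity)]
              exact hch
            calc 2 * (ℓ.choose (7+t):ℝ) * ((k:ℝ)^(t+4) * (K^2/4))
                ≤ 2 * ((L-1)*(L-2)*L^(t+5)/(5040*2^t)) * ((k:ℝ)^(t+4) * (K^2/4)) := by
                  apply mul_le_mul_of_nonneg_right _ (by positivity)
                  exact mul_le_mul_of_nonneg_left hch' (by norm_num)
              _ = ((L-1)*(L-2)*L^(t+5)/(10080*2^t)) * ((k:ℝ)^(t+4) * K^2) := by ring
              _ ≤ ((L-1)*(L-2)*L^(t+5)/(10080*2^t)) * (K^(t+6)/(k:ℝ)^4) := by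
                  apply mul_le_mul_of_nonneg_left _ hcoefnn
                  rw [le_div_iff₀ (by positivity)]
                  exact hkK
              _ = C0 * (1/2:ℝ)^t * (L*K)^(t+6) := by
                  rw [hC0, mul_pow, div_pow, one_pow, show t+6 = (t+5)+1 from rfl, pow_succ]
                  field_simp
                  ring
          have hxsplit : x^(ℓ-1) = x^(ℓ-(7+t)) * x^(t+6) := by
            rw [← pow_add]
            congr 1
            omega
          have hx6 : (L*K)^(t+6) ≤ x^(t+6) := pow_le_pow_left₀ hTpos.le hxT _
          have hffm : f (7+t) ≤ 2 * (ℓ.choose (7+t):ℝ) * P (7+t) * x^(ℓ-(7+t)) := by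
            simp only [hf]
            apply mul_le_mul_of_nonneg_right _ (by positivity)
            apply mul_le_mul_of_nonneg_right _ (hPnn _)
            exact mul_le_mul_of_nonneg_right (hone _).2 hchnn
          calc f (7+t) ≤ 2 * (ℓ.choose (7+t):ℝ) * P (7+t) * x^(ℓ-(7+t)) := hffm
            _ ≤ 2 * (ℓ.choose (7+t):ℝ) * ((k:ℝ)^(t+4)*(K^2/4)) * x^(ℓ-(7+t)) := by
                apply mul_le_mul_of_nonneg_right _ (by positivity)
                exact mul_le_mul_of_nonneg_left hPm (by positivity)
            _ ≤ (C0 * (1/2:ℝ)^t * (L*K)^(t+6)) * x^(ℓ-(7+t)) :=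
                mul_le_mul_of_nonneg_right hcoef (by positivity)
            _ ≤ (C0 * (1/2:ℝ)^t * x^(t+6)) * x^(ℓ-(7+t)) := by
                apply mul_le_mul_of_nonneg_right _ (by positivity)
                exact mul_le_mul_of_nonneg_left hx6 (mul_nonneg hC0nn (by positivity))
            _ = C0 * (1/2:ℝ)^t * x^(ℓ-1) := by rw [hxsplit]; ring
        calc ∑ m ∈ (Finset.range (ℓ+1) \ {1, 3}).filter (fun m => ¬ m < 7), f m
            ≤ ∑ m ∈ Finset.Ico 7 (ℓ+1), f m :=
              Finset.sum_le_sum_of_subset_of_nonneg hsub (fun m _ _ => hfnn m)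
          _ ≤ ∑ m ∈ Finset.Ico 7 (ℓ+1), C0 * (1/2:ℝ)^(m-7) * x^(ℓ-1) :=
              Finset.sum_le_sum hterm
          _ = ∑ i ∈ Finset.range (ℓ+1-7), C0 * (1/2:ℝ)^i * x^(ℓ-1) := by
              rw [Finset.sum_Ico_eq_sum_range]
              apply Finset.sum_congr rfl
              intro i _
              rw [show 7 + i - 7 = i from by omega]
          _ = C0 * x^(ℓ-1) * ∑ i ∈ Finset.range (ℓ+1-7), (1/2:ℝ)^i := by
              rw [Finset.mul_sum]
              apply Finset.sum_congr rfl
              intro i _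
              ring
          _ ≤ C0 * x^(ℓ-1) * 2 := by
              apply mul_le_mul_of_nonneg_left (geom_half _)
              exact mul_nonneg hC0nn (by positivity)
          _ = 2 * C0 * x^(ℓ-1) := by ring
      linarith [hpart1, hpart2]
    -- upper bound
    have hcon_up : x ≤ L*K + a := by
      by_contra hcon
      push_neg at hcon
      have hxx : (L*K+a)^2 ≤ x^2 := pow_le_pow_left₀ (by positivity) hcon.le 2
      have hqnn : (0:ℝ) ≤ a*(L*K)^2/(L*K+a)^2 :=
        div_nonneg (mul_nonneg hapos.le (by positivity)) (by positivity)
      have hf3le : f 3 ≤ (a*(L*K)^2/(L*K+a)^2) * x^(ℓ-1) := by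
        rw [hf3, hxe3]
        have h1 : a*L^2*K^2*x^(ℓ-3) = (a*(L*K)^2/(L*K+a)^2) * ((L*K+a)^2 * x^(ℓ-3)) := by
          field_simp
        rw [h1]
        calc (a*(L*K)^2/(L*K+a)^2) * ((L*K+a)^2 * x^(ℓ-3))
            ≤ (a*(L*K)^2/(L*K+a)^2) * (x^2 * x^(ℓ-3)) := by
              apply mul_le_mul_of_nonneg_left _ hqnn
              exact mul_le_mul_of_nonneg_right hxx (by positivity)
          _ = (a*(L*K)^2/(L*K+a)^2) * (x^(ℓ-3) * x^2) := by ring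
      have hxl : x * x^(ℓ-1) = x^ℓ := by rw [hxpow]; ring
      have hexp : (L*K + a*(L*K)^2/(L*K+a)^2 + E5 + 2*C0) * x^(ℓ-1)
          = L*K*x^(ℓ-1) + (a*(L*K)^2/(L*K+a)^2)*x^(ℓ-1) + (E5 + 2*C0)*x^(ℓ-1) := by ring
      have hfin : x * x^(ℓ-1) ≤ (L*K + a*(L*K)^2/(L*K+a)^2 + E5 + 2*C0) * x^(ℓ-1) := by
        rw [hxl, hsplit, hexp]
        linarith [hf1, hf3le, hrem]
      have hxle : x ≤ L*K + a*(L*K)^2/(L*K+a)^2 + E5 + 2*C0 :=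
        le_of_mul_le_mul_right (by linarith [hfin]) hxp1
      have hnum := num_upper L K (k:ℝ) a hℓ3' hrk1 hK ha
      rw [← hE5, ← hC0] at hnum
      linarith
    -- lower bound
    have hxx2 : x^2 ≤ (L*K+a)^2 := pow_le_pow_left₀ hx0.le hcon_up 2
    have hqnn : (0:ℝ) ≤ a*(L*K)^2/(L*K+a)^2 :=
      div_nonneg (mul_nonneg hapos.le (by positivity)) (by positivity)
    have hf3ge : (a*(L*K)^2/(L*K+a)^2) * x^(ℓ-1) ≤ f 3 := by
      rw [hf3, hxe3]
      have h1 : a*L^2*K^2*(x^(ℓ-3)) = (a*(L*K)^2/(L*K+a)^2) * ((L*K+a)^2 * x^(ℓ-3)) := by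
        field_simp
      have h2 : (a*(L*K)^2/(L*K+a)^2) * (x^(ℓ-3) * x^2)
          ≤ (a*(L*K)^2/(L*K+a)^2) * ((L*K+a)^2 * x^(ℓ-3)) := by
        apply mul_le_mul_of_nonneg_left _ hqnn
        calc x^(ℓ-3) * x^2 = x^2 * x^(ℓ-3) := by ring
          _ ≤ (L*K+a)^2 * x^(ℓ-3) := mul_le_mul_of_nonneg_right hxx2 (by positivity)
      calc (a*(L*K)^2/(L*K+a)^2) * (x^(ℓ-3) * x^2)
          ≤ (a*(L*K)^2/(L*K+a)^2) * ((L*K+a)^2 * x^(ℓ-3)) := h2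
        _ = a*L^2*K^2*(x^(ℓ-3)) := h1.symm
    have hxl : x * x^(ℓ-1) = x^ℓ := by rw [hxpow]; ring
    have hexp2 : (L*K + a*(L*K)^2/(L*K+a)^2) * x^(ℓ-1)
        = L*K*x^(ℓ-1) + (a*(L*K)^2/(L*K+a)^2)*x^(ℓ-1) := by ring
    have hge : (L*K + a*(L*K)^2/(L*K+a)^2) * x^(ℓ-1) ≤ x * x^(ℓ-1) := by
      rw [hxl, hsplit, hexp2]
      linarith [hf1, hf3ge, hsumnn]
    have hxge : L*K + a*(L*K)^2/(L*K+a)^2 ≤ x :=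
      le_of_mul_le_mul_right (by linarith [hge]) hxp1
    have hnum2 := num_lower L K a b hℓ3' hK2 ha hb
    exact ⟨by linarith, hcon_up⟩
end

section
/- Let ℓ ≥ 3 and let k, n be positive integers satisfying ∑_{i=0}^{k} (n+i)^ℓ = ∑_{i=k+1}^{2k} (n+i)^ℓ. Then k(k+1) < (ℓ−2)²/12. -/
set_option maxHeartbeats 1000000

open Finset

lemma ch3 (a : ℕ) : (a+3).choose 3 * 6 = (a+3)*(a+2)*(a+1) := by
  have h := Nat.choose_mul_factorial_mul_factorial (show 3 ≤ a+3 by omega)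
  have h2 : (a+3) - 3 = a := by omega
  rw [h2] at h
  have h3 : Nat.factorial (a+3) = (a+3)*(a+2)*(a+1)*Nat.factorial a := by
    rw [show a+3 = (a+2)+1 from rfl, Nat.factorial_succ,
        show a+2 = (a+1)+1 from rfl, Nat.factorial_succ, Nat.factorial_succ]
    ring
  have h4 : (a+3).choose 3 * 6 * Nat.factorial a = (a+3)*(a+2)*(a+1)*Nat.factorial a := by
    rw [← h3, ← h]
    norm_num [Nat.factorial]
  exact Nat.eq_of_mul_eq_mul_right (Nat.factorial_pos a) h4

lemma ch5 (a : ℕ) : (a+5).choose 5 * 120 = (a+5)*(a+4)*(a+3)*(a+2)*(a+1) := by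
  have h := Nat.choose_mul_factorial_mul_factorial (show 5 ≤ a+5 by omega)
  have h2 : (a+5) - 5 = a := by omega
  rw [h2] at h
  have h3 : Nat.factorial (a+5) = (a+5)*(a+4)*(a+3)*(a+2)*(a+1)*Nat.factorial a := by
    rw [show a+5 = (a+4)+1 from rfl, Nat.factorial_succ,
        show a+4 = (a+3)+1 from rfl, Nat.factorial_succ,
        show a+3 = (a+2)+1 from rfl, Nat.factorial_succ,
        show a+2 = (a+1)+1 from rfl, Nat.factorial_succ, Nat.factorial_succ]
    ring
  have h4 : (a+5).choose 5 * 120 * Nat.factorial a = (a+5)*(a+4)*(a+3)*(a+2)*(a+1)*Nat.factorial a := by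
    rw [← h3, ← h]
    norm_num [Nat.factorial]
  exact Nat.eq_of_mul_eq_mul_right (Nat.factorial_pos a) h4

lemma gauss1 (k : ℕ) : (∑ i ∈ range k, (i+1)) * 2 = k*(k+1) := by
  induction k with
  | zero => simp
  | succ k ih => rw [sum_range_succ, add_mul, ih]; ring

lemma gauss3 (k : ℕ) : (∑ i ∈ range k, (i+1)^3) * 4 = (k*(k+1))^2 := by
  induction k with
  | zero => simp
  | succ k ih => rw [sum_range_succ, add_mul, ih]; ring

lemma spow_le (k t : ℕ) : (∑ i ∈ range k, (i+1)^t) ≤ k^(t+1) := by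
  calc (∑ i ∈ range k, (i+1)^t) ≤ ∑ _i ∈ range k, k^t := by
        apply sum_le_sum
        intro i hi
        exact Nat.pow_le_pow_left (by simpa [Nat.succ_le_iff] using mem_range.mp hi) t
    _ = k * k^t := by simp [mul_comm]
    _ = k^(t+1) := by ring

lemma geom_sum_le (f : ℕ → ℕ) (a : ℕ) (hf : ∀ t, a ≤ t → 2 * f (t+1) ≤ f t) :
    ∀ b, a ≤ b → (∑ t ∈ Ico a b, f t) + 2 * f b ≤ 3 * f a := by
  intro b hb
  induction b, hb using Nat.le_induction with
  | base => simp [Ico_self]; omega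
  | succ b hb ih =>
    rw [Finset.sum_Ico_succ_top hb]
    have := hf b hb
    omega

lemma master (ℓ k n : ℕ) (hk : 0 < k)
    (heq : ∑ i ∈ Finset.range (k + 1), (n + i) ^ ℓ =
        ∑ i ∈ Finset.Icc (k + 1) (2 * k), (n + i) ^ ℓ) :
    (n+k)^ℓ = ∑ t ∈ range (ℓ+1),
      (if Odd t then 2 else 0) * ℓ.choose t * (n+k)^(ℓ-t) * (∑ i ∈ range k, (i+1)^t) := by
  set m := n + k with hm
  -- Step 1 : natural-number symmetric form
  have h1 : m^ℓ + ∑ i ∈ range k, (m - (i+1))^ℓ = ∑ i ∈ range k, (m + (i+1))^ℓ := by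
    have hL : ∑ i ∈ Finset.range (k + 1), (n + i) ^ ℓ
        = m^ℓ + ∑ i ∈ range k, (m - (i+1))^ℓ := by
      rw [← Finset.sum_range_reflect, Finset.sum_range_succ']
      have hb : ∀ i ∈ range k, (n + (k + 1 - 1 - (i+1)))^ℓ = (m - (i+1))^ℓ := by
        intro i hi
        have hik : i < k := mem_range.mp hi
        have : n + (k + 1 - 1 - (i+1)) = m - (i+1) := by omega
        rw [this]
      rw [Finset.sum_congr rfl hb]
      have h0 : (n + (k + 1 - 1 - 0))^ℓ = m^ℓ := by
        have : n + (k + 1 - 1 - 0) = m := by omega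
        rw [this]
      rw [h0]
      ring
    have hR : ∑ i ∈ Finset.Icc (k + 1) (2 * k), (n + i) ^ ℓ
        = ∑ i ∈ range k, (m + (i+1))^ℓ := by
      rw [← Finset.Ico_add_one_right_eq_Icc, Finset.sum_Ico_eq_sum_range]
      have hc : 2*k + 1 - (k+1) = k := by omega
      rw [hc]
      apply Finset.sum_congr rfl
      intro i _
      have : n + (k + 1 + i) = m + (i+1) := by omega
      rw [this]
    rw [hL, hR] at heq
    exact heq
  -- Step 2 : cast to ℤ
  have hcast : ((∑ i ∈ range k, (m - (i+1))^ℓ : ℕ) : ℤ)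
      = ∑ i ∈ range k, ((m:ℤ) - (i+1))^ℓ := by
    rw [Nat.cast_sum]
    apply Finset.sum_congr rfl
    intro i hi
    have hik : i + 1 ≤ m := by
      have := mem_range.mp hi; omega
    rw [Nat.cast_pow, Nat.cast_sub hik]
    push_cast
    ring
  have h2 : ((m:ℤ))^ℓ = ∑ i ∈ range k, (((m:ℤ) + ((i:ℤ)+1))^ℓ - ((m:ℤ) - ((i:ℤ)+1))^ℓ) := by
    have h1' := congrArg (fun x : ℕ => (x : ℤ)) h1
    simp only [Nat.cast_add, Nat.cast_sum, Nat.cast_pow] at h1'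
    have hpt2 : ∀ i ∈ range k, ((m - (i+1) : ℕ) : ℤ)^ℓ = ((m:ℤ) - ((i:ℤ)+1))^ℓ := by
      intro i hi
      have hik : i + 1 ≤ m := by
        have := mem_range.mp hi; omega
      rw [Nat.cast_sub hik]
      push_cast
      ring
    rw [Finset.sum_congr rfl hpt2] at h1'
    push_cast at h1'
    rw [Finset.sum_sub_distrib]
    linarith [h1']
  -- Step 3 : binomial expansion of each difference
  have h3 : ∀ c : ℤ, ((m:ℤ) + c)^ℓ - ((m:ℤ) - c)^ℓ
      = ∑ t ∈ range (ℓ+1), (1 - (-1)^t) * c^t * (m:ℤ)^(ℓ-t) * (ℓ.choose t) := by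
    intro c
    have e1 : ((m:ℤ) + c)^ℓ = ∑ t ∈ range (ℓ+1), c^t * (m:ℤ)^(ℓ-t) * (ℓ.choose t) := by
      rw [show (m:ℤ) + c = c + (m:ℤ) by ring, add_pow]
    have e2 : ((m:ℤ) - c)^ℓ = ∑ t ∈ range (ℓ+1), (-1)^t * c^t * (m:ℤ)^(ℓ-t) * (ℓ.choose t) := by
      rw [show (m:ℤ) - c = (-c) + (m:ℤ) by ring, add_pow]
      apply Finset.sum_congr rfl
      intro t _
      rw [neg_pow]
    rw [e1, e2, ← Finset.sum_sub_distrib]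
    apply Finset.sum_congr rfl
    intro t _
    ring
  -- Step 4 : swap summation order
  have h4 : ((m:ℤ))^ℓ = ∑ t ∈ range (ℓ+1),
      (1 - (-1)^t) * (ℓ.choose t) * (m:ℤ)^(ℓ-t) * (∑ i ∈ range k, ((i:ℤ)+1)^t) := by
    rw [h2]
    have hpt : ∀ i ∈ range k, ((m:ℤ) + ((i:ℤ)+1))^ℓ - ((m:ℤ) - ((i:ℤ)+1))^ℓ
        = ∑ t ∈ range (ℓ+1), (1 - (-1)^t) * ((i:ℤ)+1)^t * (m:ℤ)^(ℓ-t) * (ℓ.choose t) := by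
      intro i _
      exact h3 ((i:ℤ)+1)
    rw [Finset.sum_congr rfl hpt, Finset.sum_comm]
    apply Finset.sum_congr rfl
    intro t _
    rw [Finset.mul_sum]
    apply Finset.sum_congr rfl
    intro i _
    ring
  -- Step 5 : coefficients
  have h5 : ∀ t : ℕ, ((if Odd t then 2 else 0 : ℕ) : ℤ) = (1 - (-1:ℤ)^t) := by
    intro t
    by_cases ht : Odd t
    · rw [ht.neg_one_pow]; simp [ht]
    · rw [Nat.not_odd_iff_even] at ht
      rw [ht.neg_one_pow]; simp [Nat.odd_iff, Nat.even_iff.mp ht]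
  -- Step 6 : back to ℕ
  have h6 : (((∑ t ∈ range (ℓ+1),
      (if Odd t then 2 else 0) * ℓ.choose t * m^(ℓ-t) * (∑ i ∈ range k, (i+1)^t) : ℕ)) : ℤ)
      = ((m:ℤ))^ℓ := by
    rw [h4, Nat.cast_sum]
    apply Finset.sum_congr rfl
    intro t _
    rw [Nat.cast_mul, Nat.cast_mul, Nat.cast_mul, h5 t]
    push_cast
    ring
  exact_mod_cast h6.symm

lemma Rbound (ℓ k m : ℕ) (hl : 5 ≤ ℓ) (hm : 2*ℓ*k ≤ m) :
    (∑ t ∈ Ico 5 (ℓ+1), (if Odd t then 2 else 0) * ℓ.choose t * m^(ℓ-t) * (∑ i ∈ range k, (i+1)^t))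
      ≤ 6 * (ℓ.choose 5 * k^6 * m^(ℓ-5)) := by
  set f : ℕ → ℕ := fun t => ℓ.choose t * k^(t+1) * m^(ℓ-t) with hf
  have hhalf : ∀ t, 5 ≤ t → 2 * f (t+1) ≤ f t := by
    intro t ht
    by_cases htl : t < ℓ
    · have hch : ℓ.choose (t+1) ≤ ℓ * ℓ.choose t := by
        calc ℓ.choose (t+1) ≤ ℓ.choose (t+1) * (t+1) :=
              Nat.le_mul_of_pos_right _ (by omega)
          _ = ℓ.choose t * (ℓ - t) := Nat.choose_succ_right_eq ℓ t
          _ ≤ ℓ.choose t * ℓ := Nat.mul_le_mul_left _ (by omega)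
          _ = ℓ * ℓ.choose t := Nat.mul_comm _ _
    
      have hexp : m^(ℓ-t) = m^(ℓ-(t+1)) * m := by
        rw [← pow_succ]; congr 1; omega
      calc 2 * f (t+1) = 2 * (ℓ.choose (t+1) * k^(t+1+1) * m^(ℓ-(t+1))) := rfl
        _ ≤ 2 * ((ℓ * ℓ.choose t) * k^(t+1+1) * m^(ℓ-(t+1))) := by
            apply Nat.mul_le_mul_left
            exact Nat.mul_le_mul_right _ (Nat.mul_le_mul_right _ hch)
        _ = (ℓ.choose t * k^(t+1)) * m^(ℓ-(t+1)) * (2*ℓ*k) := by ring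
        _ ≤ (ℓ.choose t * k^(t+1)) * m^(ℓ-(t+1)) * m := Nat.mul_le_mul_left _ hm
        _ = f t := by simp only [hf]; rw [hexp]; ring
    · have hz : ℓ.choose (t+1) = 0 := Nat.choose_eq_zero_of_lt (by omega)
      simp [hf, hz]
  have hgeo := geom_sum_le f 5 hhalf (ℓ+1) (by omega)
  have hterm : ∀ t ∈ Ico 5 (ℓ+1),
      (if Odd t then 2 else 0) * ℓ.choose t * m^(ℓ-t) * (∑ i ∈ range k, (i+1)^t) ≤ 2 * f t := by
    intro t _
    have he : (if Odd t then 2 else 0) ≤ 2 := by split <;> omega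
    have hS : (∑ i ∈ range k, (i+1)^t) ≤ k^(t+1) := spow_le k t
    calc (if Odd t then 2 else 0) * ℓ.choose t * m^(ℓ-t) * (∑ i ∈ range k, (i+1)^t)
        ≤ 2 * ℓ.choose t * m^(ℓ-t) * (∑ i ∈ range k, (i+1)^t) := by
          exact Nat.mul_le_mul_right _ (Nat.mul_le_mul_right _ (Nat.mul_le_mul_right _ he))
      _ ≤ 2 * ℓ.choose t * m^(ℓ-t) * k^(t+1) := Nat.mul_le_mul_left _ hS
      _ = 2 * f t := by rw [hf]; ring
  calc (∑ t ∈ Ico 5 (ℓ+1), (if Odd t then 2 else 0) * ℓ.choose t * m^(ℓ-t) * (∑ i ∈ range k, (i+1)^t))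
      ≤ ∑ t ∈ Ico 5 (ℓ+1), 2 * f t := Finset.sum_le_sum hterm
    _ = 2 * ∑ t ∈ Ico 5 (ℓ+1), f t := (Finset.mul_sum _ _ _).symm
    _ ≤ 2 * (3 * f 5) := by
        apply Nat.mul_le_mul_left
        omega
    _ = 6 * (ℓ.choose 5 * k^6 * m^(ℓ-5)) := by rw [hf]; ring

lemma id4 (ℓ k n : ℕ) (hk : 0 < k) (hl : 5 ≤ ℓ)
    (heq : ∑ i ∈ Finset.range (k + 1), (n + i) ^ ℓ =
        ∑ i ∈ Finset.Icc (k + 1) (2 * k), (n + i) ^ ℓ) :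
    12 * (n+k)^ℓ = 12*(ℓ*(k*(k+1)))*(n+k)^(ℓ-1)
      + (ℓ*(ℓ-1)*(ℓ-2)*(k*(k+1))^2)*(n+k)^(ℓ-3)
      + 12 * (∑ t ∈ Ico 5 (ℓ+1), (if Odd t then 2 else 0) * ℓ.choose t * (n+k)^(ℓ-t)
            * (∑ i ∈ range k, (i+1)^t)) := by
  have hmas := master ℓ k n hk heq
  set m := n + k with hm
  set S : ℕ → ℕ := fun t => ∑ i ∈ range k, (i+1)^t with hS
  set g : ℕ → ℕ := fun t => (if Odd t then 2 else 0) * ℓ.choose t * m^(ℓ-t) * S t with hg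
  have hsplit : ∑ t ∈ range (ℓ+1), g t = (∑ t ∈ range 5, g t) + ∑ t ∈ Ico 5 (ℓ+1), g t :=
    (Finset.sum_range_add_sum_Ico g (by omega)).symm
  have hsmall : ∑ t ∈ range 5, g t = 2 * ℓ * m^(ℓ-1) * S 1 + 2 * ℓ.choose 3 * m^(ℓ-3) * S 3 := by
    simp only [hg]
    rw [Finset.sum_range_succ, Finset.sum_range_succ, Finset.sum_range_succ,
        Finset.sum_range_succ, Finset.sum_range_succ]
    norm_num [Nat.choose_one_right, Nat.odd_iff]
  have hmas2 : m^ℓ = 2 * ℓ * m^(ℓ-1) * S 1 + 2 * ℓ.choose 3 * m^(ℓ-3) * S 3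
      + ∑ t ∈ Ico 5 (ℓ+1), g t := by
    rw [hmas, hsplit, hsmall]
  have hg1 : S 1 * 2 = k*(k+1) := by
    have := gauss1 k
    simp only [hS]
    simpa [pow_one] using this
  have hg3 : S 3 * 4 = (k*(k+1))^2 := gauss3 k
  have hc3 : ℓ.choose 3 * 6 = ℓ*(ℓ-1)*(ℓ-2) := by
    obtain ⟨a, rfl⟩ : ∃ a, ℓ = a + 3 := ⟨ℓ - 3, by omega⟩
    have e1 : a + 3 - 1 = a + 2 := by omega
    have e2 : a + 3 - 2 = a + 1 := by omega
    rw [e1, e2]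
    exact ch3 a
  calc 12 * m^ℓ
      = (12 * ℓ * m^(ℓ-1)) * (S 1 * 2) + (ℓ.choose 3 * 6) * m^(ℓ-3) * (S 3 * 4)
        + 12 * ∑ t ∈ Ico 5 (ℓ+1), g t := by rw [hmas2]; ring
    _ = 12*(ℓ*(k*(k+1)))*m^(ℓ-1) + (ℓ*(ℓ-1)*(ℓ-2)*(k*(k+1))^2)*m^(ℓ-3)
        + 12 * ∑ t ∈ Ico 5 (ℓ+1), g t := by rw [hg1, hg3, hc3]; ring

lemma arith1 (q r K : ℕ) (hr : r ≤ 11) (hKq : 12*q^2 + 2*q + 1 ≤ K) :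
    12*q*((12*q+r+3)*K + q)^2 ≤ (12*q+r+3)*((12*q+r+2)*((12*q+r+1)*K^2)) := by
  have hK12 : 12*q^2 ≤ K := le_trans (by omega) hKq
  have e1 : 12*q^3 ≤ 2*((12*q+r+3)*K)*(2*q+1) := by
    calc 12*q^3 ≤ 2*((12*q)*(12*q^2))*1 := by nlinarith [sq_nonneg q]
      _ ≤ 2*((12*q+r+3)*K)*(2*q+1) := by
          apply Nat.mul_le_mul
          · apply Nat.mul_le_mul_left
            exact Nat.mul_le_mul (by omega) hK12
          · omega
  have e2 : 24*q^2*((12*q+r+3)*K) + 12*q^3 ≤ 2*(12*q+r+3)*K^2 := by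
    calc 24*q^2*((12*q+r+3)*K) + 12*q^3
        ≤ 24*q^2*((12*q+r+3)*K) + 2*((12*q+r+3)*K)*(2*q+1) := by omega
      _ = ((12*q+r+3)*K)*(24*q^2 + 2*(2*q+1)) := by ring
      _ ≤ ((12*q+r+3)*K)*(2*K) := by
          apply Nat.mul_le_mul_left
          omega
      _ = 2*(12*q+r+3)*K^2 := by ring
  calc 12*q*((12*q+r+3)*K + q)^2
      = 12*q*((12*q+r+3)*K)^2 + (24*q^2*((12*q+r+3)*K) + 12*q^3) := by ring
    _ ≤ 12*q*((12*q+r+3)*K)^2 + 2*(12*q+r+3)*K^2 := by omega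
    _ ≤ 12*q*((12*q+r+3)*K)^2 + r*((12*q+r+3)*K)^2 + 2*(12*q+r+3)*K^2 := by omega
    _ = (12*q+r+3)*((12*q+r+2)*((12*q+r+1)*K^2)) := by ring

lemma arith2 (u k K : ℕ) (hk : 1 ≤ k) (hKdef : K = k*(k+1)) (hK : (u+3)^2 ≤ 12*K) :
    72 * ((u+5).choose 5) * k^6 < (u+5)^3*((u+3)*K^4) := by
  have hc := ch5 u
  have hK1 : 1 ≤ K := by subst hKdef; nlinarith
  -- step A : 120 * C5 ≤ (u+5)*(u+3)^4
  have hA : (u+5).choose 5 * 120 ≤ (u+5)*(u+3)^4 := by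
    rw [hc]
    nlinarith [sq_nonneg (u+3)]
  -- step B : 3*k^6*(u+3)^3 < 5*(u+5)^2*K^4
  have hB : 3*k^6*(u+3)^3 < 5*(u+5)^2*K^4 := by
    have h1 : (u+3)^3 ≤ 12*K*(u+3) := by nlinarith
    have h2 : 3*k^6*((u+3)^3) ≤ 36*k^6*K*(u+3) := by
      calc 3*k^6*((u+3)^3) ≤ 3*k^6*(12*K*(u+3)) := Nat.mul_le_mul_left _ h1
        _ = 36*k^6*K*(u+3) := by ring
    have h3 : 36*k^6*K*(u+3) < 5*(u+5)^2*K^4 := by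
      have hKK : K^4 = K*(k^3*(k+1)^3) := by subst hKdef; ring
      rw [hKK]
      have h4 : 36*(u+3)*k^3 < 5*(u+5)^2*(k+1)^3 := by
        have h5 : 36*(u+3) ≤ 5*(u+5)^2 := by nlinarith
        have h6 : k^3 < (k+1)^3 := by nlinarith
        calc 36*(u+3)*k^3 ≤ 5*(u+5)^2*k^3 := Nat.mul_le_mul_right _ h5
          _ < 5*(u+5)^2*(k+1)^3 := mul_lt_mul_of_pos_left h6 (by positivity)
      calc 36*k^6*K*(u+3) = (36*(u+3)*k^3)*(K*k^3) := by ring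
        _ < (5*(u+5)^2*(k+1)^3)*(K*k^3) := mul_lt_mul_of_pos_right h4 (by positivity)
        _ = 5*(u+5)^2*(K*(k^3*(k+1)^3)) := by ring
    omega
  -- combine
  have hcomb : 120*(72 * ((u+5).choose 5) * k^6) < 120*((u+5)^3*((u+3)*K^4)) := by
    calc 120*(72 * ((u+5).choose 5) * k^6) = 72*k^6*((u+5).choose 5 * 120) := by ring
      _ ≤ 72*k^6*((u+5)*(u+3)^4) := Nat.mul_le_mul_left _ hA
      _ = 24*(u+5)*(u+3)*(3*k^6*(u+3)^3) := by ring
      _ < 24*(u+5)*(u+3)*(5*(u+5)^2*K^4) := mul_lt_mul_of_pos_left hB (by positivity)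
      _ = 120*((u+5)^3*((u+3)*K^4)) := by ring
  omega

/-- If `ℓ ≥ 3` and `(k, n)` is a positive solution of equation (1), then
`k(k+1) < (ℓ-2)²/12`. -/
theorem K_lt (ℓ k n : ℕ) (hℓ : 3 ≤ ℓ) (hk : 0 < k) (hn : 0 < n)
    (heq : ∑ i ∈ Finset.range (k + 1), (n + i) ^ ℓ =
        ∑ i ∈ Finset.Icc (k + 1) (2 * k), (n + i) ^ ℓ) :
    (k : ℝ) * ((k : ℝ) + 1) < ((ℓ : ℝ) - 2) ^ 2 / 12 := by
  by_contra hcon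
  push_neg at hcon
  -- convert to ℕ
  have hK : (ℓ-2)^2 ≤ 12*(k*(k+1)) := by
    have h2 : ((ℓ-2:ℕ):ℝ) = (ℓ:ℝ) - 2 := by
      have h3 : (2:ℕ) ≤ ℓ := by omega
      push_cast [Nat.cast_sub h3]
      ring
    have h4 : ((ℓ:ℝ) - 2)^2 ≤ (k:ℝ) * ((k:ℝ)+1) * 12 :=
      (div_le_iff₀ (by norm_num : (0:ℝ) < 12)).mp hcon
    rw [← h2] at h4
    have h5 : ((ℓ-2:ℕ):ℝ)^2 ≤ ((k*(k+1)*12 : ℕ) : ℝ) := by push_cast; linarith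
    have h6 : (ℓ-2)^2 ≤ k*(k+1)*12 := by exact_mod_cast h5
    omega
  -- notation
  set m := n + k with hmdef
  set K := k*(k+1) with hKdef
  have hK2 : 2 ≤ K := by rw [hKdef]; nlinarith
  have hm1 : 1 ≤ m := by omega
  set S : ℕ → ℕ := fun t => ∑ i ∈ range k, (i+1)^t with hSdef
  have hS1 : S 1 * 2 = K := by
    simp only [hSdef]
    simpa [pow_one] using gauss1 k
  have hS3 : S 3 * 4 = K^2 := gauss3 k
  rcases Nat.lt_or_ge ℓ 5 with h5 | h5
  · -- ℓ = 3 or ℓ = 4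
    have hmas := master ℓ k n hk heq
    interval_cases ℓ
    · -- ℓ = 3
      have e : m^3 = 6*m^2*(S 1) + 2*(S 3) := by
        rw [hmas]
        rw [Finset.sum_range_succ, Finset.sum_range_succ, Finset.sum_range_succ,
            Finset.sum_range_succ]
        norm_num [Nat.odd_iff, hSdef]
        simp [hmdef]
      have E : 2*m^3 = 6*K*m^2 + K^2 := by
        calc 2*m^3 = 6*m^2*(S 1 * 2) + (S 3 * 4) := by rw [e]; ring
          _ = 6*K*m^2 + K^2 := by rw [hS1, hS3]; ring
      have h31 : 3*K + 1 ≤ m := by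
        by_contra hcc
        push_neg at hcc
        have h2m : 2*m ≤ 6*K := by omega
        have : 2*m^3 ≤ 6*K*m^2 := by
          calc 2*m^3 = (2*m)*m^2 := by ring
            _ ≤ (6*K)*m^2 := Nat.mul_le_mul_right _ h2m
        have hKsq : 0 < K^2 := by positivity
        linarith
      have hm2 : (3*K+1)^2 ≤ m^2 := Nat.pow_le_pow_left h31 2
      have hcube : (3*K+1)*m^2 ≤ m*m^2 := Nat.mul_le_mul_right _ h31
      have hp : m^3 = m*m^2 := by ring
      nlinarith [E, hm2, hcube, hK2]
    · -- ℓ = 4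
      have e : m^4 = 8*m^3*(S 1) + 8*m*(S 3) := by
        rw [hmas]
        rw [Finset.sum_range_succ, Finset.sum_range_succ, Finset.sum_range_succ,
            Finset.sum_range_succ, Finset.sum_range_succ]
        norm_num [Nat.odd_iff, hSdef]
        simp [hmdef]
      have E : m^4 = 4*K*m^3 + 2*m*K^2 := by
        calc m^4 = 8*m^3*(S 1) + 8*m*(S 3) := e
          _ = 4*m^3*(S 1 * 2) + 2*m*(S 3 * 4) := by ring
          _ = 4*K*m^3 + 2*m*K^2 := by rw [hS1, hS3]; ring
      have h41 : 4*K + 1 ≤ m := by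
        by_contra hcc
        push_neg at hcc
        have h2m : m ≤ 4*K := by omega
        have : m^4 ≤ 4*K*m^3 := by
          calc m^4 = m*m^3 := by ring
            _ ≤ (4*K)*m^3 := Nat.mul_le_mul_right _ h2m
        have hpos : 1 ≤ 2*m*K^2 := by
          have : 0 < 2*m*K^2 := by positivity
          omega
        linarith
      have hm2 : (4*K+1)^2 ≤ m^2 := Nat.pow_le_pow_left h41 2
      have hquart : (4*K+1)*m^3 ≤ m*m^3 := Nat.mul_le_mul_right _ h41
      -- m^4 - 4K m^3 = m^3*(m-4K) ≥ m^3 so 2mK^2 ≥ m^3 = m*m^2 so 2K^2 ≥ m^2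
      have hge : m^3 ≤ 2*m*K^2 := by nlinarith [E, hquart]
      have hge2 : m*m^2 ≤ m*(2*K^2) := by
        calc m*m^2 = m^3 := by ring
          _ ≤ 2*m*K^2 := hge
          _ = m*(2*K^2) := by ring
      have hge3 : m^2 ≤ 2*K^2 := Nat.le_of_mul_le_mul_left hge2 (by omega)
      nlinarith [hm2, hge3, hK2]
  · -- ℓ ≥ 5
    have hid := id4 ℓ k n hk h5 heq
    set R := ∑ t ∈ Ico 5 (ℓ+1), (if Odd t then 2 else 0) * ℓ.choose t * m^(ℓ-t) * (S t)
      with hRdef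
    set A := ℓ*(ℓ-1)*(ℓ-2)*K^2 with hAdef
    set q := (ℓ-3)/12 with hqdef
    set r := (ℓ-3)%12 with hrdef
    have hlq : ℓ = 12*q + r + 3 := by omega
    have hr11 : r ≤ 11 := by omega
    have hKq : 12*q^2 + 2*q + 1 ≤ K := by
      have h1 : (12*q+1)^2 ≤ (ℓ-2)^2 := Nat.pow_le_pow_left (by omega) 2
      have h2 : 12*(12*q^2+2*q) < 12*K := by
        calc 12*(12*q^2+2*q) < (12*q+1)^2 := by nlinarith
          _ ≤ 12*K := le_trans h1 hK
      have := Nat.lt_of_mul_lt_mul_left h2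
      omega
    -- power decompositions
    have p3 : m^ℓ = m^3 * m^(ℓ-3) := by rw [← pow_add]; congr 1; omega
    have p2 : m^(ℓ-1) = m^2 * m^(ℓ-3) := by rw [← pow_add]; congr 1; omega
    have p5 : m^ℓ = m^5 * m^(ℓ-5) := by rw [← pow_add]; congr 1; omega
    have p4 : m^(ℓ-1) = m^4 * m^(ℓ-5) := by rw [← pow_add]; congr 1; omega
    have p25 : m^(ℓ-3) = m^2 * m^(ℓ-5) := by rw [← pow_add]; congr 1; omega
    have hsub1 : ℓ-1 = 12*q+r+2 := by omega
    have hsub2 : ℓ-2 = 12*q+r+1 := by omega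
    rcases Nat.lt_or_ge (ℓ*K + q) m with hcase2 | hcase1
    · -- Case 2 : m ≥ ℓK + q + 1
      have hmlK : ℓ*K ≤ m := by omega
      have h2lk : 2*ℓ*k ≤ m := by
        have hkk : 2*k ≤ K := by rw [hKdef]; nlinarith [hk]
        calc 2*ℓ*k = ℓ*(2*k) := by ring
          _ ≤ ℓ*K := Nat.mul_le_mul_left _ hkk
          _ ≤ m := hmlK
      have hRb : R ≤ 6 * (ℓ.choose 5 * k^6 * m^(ℓ-5)) := Rbound ℓ k m h5 h2lk
      -- from the identity : 12 m^5 ≤ 12 ℓK m^4 + A m^2 + 72 C5 k^6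
      have hstar : 12*m^5 ≤ 12*(ℓ*K)*m^4 + A*m^2 + 72*(ℓ.choose 5)*k^6 := by
        have hid2 : (12*m^5) * m^(ℓ-5)
            = (12*(ℓ*K)*m^4 + A*m^2) * m^(ℓ-5) + 12*R := by
          have h := hid
          rw [p5, p4, p25] at h
          calc (12*m^5) * m^(ℓ-5) = 12*(m^5*m^(ℓ-5)) := by ring
            _ = 12*(ℓ*K)*(m^4*m^(ℓ-5)) + A*(m^2*m^(ℓ-5)) + 12*R := h
            _ = (12*(ℓ*K)*m^4 + A*m^2) * m^(ℓ-5) + 12*R := by ring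
        have hle : (12*m^5) * m^(ℓ-5)
            ≤ (12*(ℓ*K)*m^4 + A*m^2 + 72*(ℓ.choose 5)*k^6) * m^(ℓ-5) := by
          rw [hid2]
          have : 12*R ≤ 72*(ℓ.choose 5)*k^6 * m^(ℓ-5) := by
            calc 12*R ≤ 12*(6 * (ℓ.choose 5 * k^6 * m^(ℓ-5))) := Nat.mul_le_mul_left _ hRb
              _ = 72*(ℓ.choose 5)*k^6 * m^(ℓ-5) := by ring
          calc (12*(ℓ*K)*m^4 + A*m^2) * m^(ℓ-5) + 12*R
              ≤ (12*(ℓ*K)*m^4 + A*m^2) * m^(ℓ-5) + 72*(ℓ.choose 5)*k^6 * m^(ℓ-5) := by omega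
            _ = (12*(ℓ*K)*m^4 + A*m^2 + 72*(ℓ.choose 5)*k^6) * m^(ℓ-5) := by ring
        exact Nat.le_of_mul_le_mul_right hle (pow_pos (by omega) _)
      -- strict opposite inequality
      have st1 : 12*(ℓ*K)*m^4 + 12*(q+1)*m^4 ≤ 12*m^5 := by
        calc 12*(ℓ*K)*m^4 + 12*(q+1)*m^4 = (ℓ*K + q + 1)*(12*m^4) := by ring
          _ ≤ m*(12*m^4) := Nat.mul_le_mul_right _ (by omega)
          _ = 12*m^5 := by ring
      have hcoef : A + ℓ*(ℓ-2)*K^2 ≤ 12*(q+1)*m^2 := by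
        have hAid : A + ℓ*(ℓ-2)*K^2 = (ℓ-2)*(ℓ*K)^2 := by
          rw [hAdef, hsub1, hsub2, hlq]
          ring
        have hm2 : (ℓ*K)^2 ≤ m^2 := Nat.pow_le_pow_left hmlK 2
        calc A + ℓ*(ℓ-2)*K^2 = (ℓ-2)*(ℓ*K)^2 := hAid
          _ ≤ (ℓ-2)*m^2 := Nat.mul_le_mul_left _ hm2
          _ ≤ (12*(q+1))*m^2 := Nat.mul_le_mul_right _ (by omega)
          _ = 12*(q+1)*m^2 := by ring
      have st2 : A*m^2 + (ℓ*(ℓ-2)*K^2)*m^2 ≤ 12*(q+1)*m^4 := by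
        calc A*m^2 + (ℓ*(ℓ-2)*K^2)*m^2 = (A + ℓ*(ℓ-2)*K^2)*m^2 := by ring
          _ ≤ (12*(q+1)*m^2)*m^2 := Nat.mul_le_mul_right _ hcoef
          _ = 12*(q+1)*m^4 := by ring
      have st3 : 72*(ℓ.choose 5)*k^6 < (ℓ*(ℓ-2)*K^2)*m^2 := by
        obtain ⟨u, hu⟩ : ∃ u, ℓ = u + 5 := ⟨ℓ - 5, by omega⟩
        have hKu : (u+3)^2 ≤ 12*K := by
          have : ℓ - 2 = u + 3 := by omega
          rw [← this]
          exact hK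
        have ha2 := arith2 u k K hk hKdef hKu
        have hm2 : (ℓ*K)^2 ≤ m^2 := Nat.pow_le_pow_left hmlK 2
        calc 72*(ℓ.choose 5)*k^6 < (u+5)^3*((u+3)*K^4) := by rw [hu]; exact ha2
          _ = (ℓ*(ℓ-2)*K^2)*(ℓ*K)^2 := by
              rw [hu, show u+5-2 = u+3 from by omega]
              ring
          _ ≤ (ℓ*(ℓ-2)*K^2)*m^2 := Nat.mul_le_mul_left _ hm2
      linarith
    · -- Case 1 : m ≤ ℓK + q
      have hR2 : 2 ≤ R := by
        have h5m : (5:ℕ) ∈ Ico 5 (ℓ+1) := by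
          simp only [Finset.mem_Ico]
          omega
        have hsingle := Finset.single_le_sum
          (f := fun t => (if Odd t then 2 else 0) * ℓ.choose t * m^(ℓ-t) * (S t))
          (fun i _ => Nat.zero_le _) h5m
        have hS5 : 1 ≤ S 5 := by
          simp only [hSdef]
          have h0k : (0:ℕ) ∈ range k := by simp [hk]
          calc 1 = (0+1)^5 := by norm_num
            _ ≤ ∑ i ∈ range k, (i+1)^5 :=
              Finset.single_le_sum (f := fun i => (i+1)^5) (fun i _ => Nat.zero_le _) h0k
        have hC5 : 1 ≤ ℓ.choose 5 := Nat.choose_pos h5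
        have hmp : 1 ≤ m^(ℓ-5) := Nat.one_le_pow _ _ (by omega)
        calc 2 = 2*1*1*1 := by norm_num
          _ ≤ 2 * ℓ.choose 5 * m^(ℓ-5) * (S 5) := by
              exact Nat.mul_le_mul (Nat.mul_le_mul (Nat.mul_le_mul_left _ hC5) hmp) hS5
          _ = (if Odd 5 then 2 else 0) * ℓ.choose 5 * m^(ℓ-5) * (S 5) := by norm_num [Nat.odd_iff]
          _ ≤ R := hsingle
      have key : 12*m^3 ≤ 12*(ℓ*K)*m^2 + A := by
        rcases Nat.lt_or_ge (ℓ*K) m with hmgt | hmle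
        · -- ℓK < m ≤ ℓK + q
          have hd : m ≤ ℓ*K + q := hcase1
          have step1 : 12*m^3 ≤ 12*(ℓ*K)*m^2 + 12*q*m^2 := by
            calc 12*m^3 = m*(12*m^2) := by ring
              _ ≤ (ℓ*K+q)*(12*m^2) := Nat.mul_le_mul_right _ hd
              _ = 12*(ℓ*K)*m^2 + 12*q*m^2 := by ring
          have hm2 : m^2 ≤ (ℓ*K+q)^2 := Nat.pow_le_pow_left hd 2
          have step2 : 12*q*m^2 ≤ 12*q*(ℓ*K+q)^2 := Nat.mul_le_mul_left _ hm2
          have step3 : 12*q*(ℓ*K+q)^2 ≤ A := by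
            have ha1 := arith1 q r K hr11 hKq
            rw [hAdef, hsub1, hsub2]
            calc 12*q*(ℓ*K+q)^2 = 12*q*((12*q+r+3)*K + q)^2 := by rw [← hlq]
              _ ≤ (12*q+r+3)*((12*q+r+2)*((12*q+r+1)*K^2)) := ha1
              _ = ℓ*(12*q+r+2)*(12*q+r+1)*K^2 := by rw [← hlq]; ring
          linarith
        · -- m ≤ ℓK
          have : 12*m^3 ≤ 12*(ℓ*K)*m^2 := by
            calc 12*m^3 = m*(12*m^2) := by ring
              _ ≤ (ℓ*K)*(12*m^2) := Nat.mul_le_mul_right _ hmle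
              _ = 12*(ℓ*K)*m^2 := by ring
          linarith
      -- contradiction with the identity
      have hid3 : (12*m^3) * m^(ℓ-3)
          = (12*(ℓ*K)*m^2 + A) * m^(ℓ-3) + 12*R := by
        have h := hid
        rw [p3, p2] at h
        calc (12*m^3) * m^(ℓ-3) = 12*(m^3*m^(ℓ-3)) := by ring
          _ = 12*(ℓ*K)*(m^2*m^(ℓ-3)) + A*m^(ℓ-3) + 12*R := h
          _ = (12*(ℓ*K)*m^2 + A) * m^(ℓ-3) + 12*R := by ring
      have hle3 : (12*m^3) * m^(ℓ-3) ≤ (12*(ℓ*K)*m^2 + A) * m^(ℓ-3) :=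
        Nat.mul_le_mul_right _ key
      linarith
end

section
/- Let ℓ ≥ 6 be even, let k, n be positive integers satisfying ∑_{i=0}^{k} (n+i)^ℓ = ∑_{i=k+1}^{2k} (n+i)^ℓ, set w = n + k, f = ν₂(k(k+1)), g = ν₂(w), e = ν₂(ℓ), and s = 2^{(2f−1)+2g+e}. Then w^{ℓ−1} ≡ ℓ·w^{ℓ−2}·k(k+1) + 2ℓ·∑_{i=1}^{k} i^{ℓ−1} (mod s). -/
open Finset

private def Tpow (q s : ℕ) : ℤ := ∑ j ∈ Finset.range q, (j : ℤ) ^ s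

private lemma ce_Qlem (r : ℕ) : ∀ t : ℕ, (2:ℤ)^(t-1) ∣ Tpow (2^t) r := by
  intro t
  induction t with
  | zero => simp
  | succ t ih =>
    have h2 : (2:ℕ)^(t+1) = 2^t + 2^t := by rw [pow_succ]; omega
    have hsplit : Tpow (2^(t+1)) r
        = Tpow (2^t) r + ∑ j ∈ Finset.range (2^t), ((2^t + j : ℕ) : ℤ)^r := by
      unfold Tpow
      rw [h2, Finset.sum_range_add]
    have h1 : (2:ℤ)^t ∣ ∑ j ∈ Finset.range (2^t), (((2^t + j : ℕ):ℤ)^r - (j:ℤ)^r) := by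
      refine Finset.dvd_sum fun j _ => ?_
      have := sub_dvd_pow_sub_pow (((2^t + j : ℕ)):ℤ) (j:ℤ) r
      have hcast : (((2^t + j : ℕ)):ℤ) - (j:ℤ) = (2:ℤ)^t := by push_cast; ring
      rwa [hcast] at this
    rcases Nat.eq_zero_or_pos t with ht | ht
    · subst ht; simpa using one_dvd _
    have h3 : (2:ℤ)^t ∣ 2 * Tpow (2^t) r := by
      obtain ⟨c, hc⟩ := ih
      refine ⟨c, ?_⟩
      have key : (2:ℤ)^t = 2 * 2^(t-1) := by
        rw [← pow_succ']; congr 1; omega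
      rw [hc, key]; ring
    have hfin : Tpow (2^(t+1)) r
        = 2 * Tpow (2^t) r + ∑ j ∈ Finset.range (2^t), (((2^t + j : ℕ):ℤ)^r - (j:ℤ)^r) := by
      rw [hsplit, Finset.sum_sub_distrib]
      unfold Tpow; ring
    have : (t + 1) - 1 = t := by omega
    rw [this, hfin]
    exact dvd_add h3 h1

private lemma ce_block (b r : ℕ) : ∀ v : ℕ, (b:ℤ) ∣ Tpow (b*v) r - v * Tpow b r := by
  intro v
  induction v with
  | zero => simp [Tpow]
  | succ v ih =>
    have hsplit : Tpow (b*(v+1)) r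
        = Tpow (b*v) r + ∑ j ∈ Finset.range b, ((b*v + j : ℕ):ℤ)^r := by
      unfold Tpow
      rw [Nat.mul_succ, Finset.sum_range_add]
    have h1 : (b:ℤ) ∣ ∑ j ∈ Finset.range b, (((b*v + j : ℕ):ℤ)^r - (j:ℤ)^r) := by
      refine Finset.dvd_sum fun j _ => ?_
      have := sub_dvd_pow_sub_pow (((b*v + j : ℕ)):ℤ) (j:ℤ) r
      have hcast : (((b*v + j : ℕ)):ℤ) - (j:ℤ) = (b:ℤ)*v := by push_cast; ring
      rw [hcast] at this
      exact dvd_trans (Dvd.intro v rfl) this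
    have hfin : Tpow (b*(v+1)) r - (v+1 : ℕ) * Tpow b r
        = (Tpow (b*v) r - v * Tpow b r)
          + ∑ j ∈ Finset.range b, (((b*v + j : ℕ):ℤ)^r - (j:ℤ)^r) := by
      rw [hsplit, Finset.sum_sub_distrib]
      push_cast
      unfold Tpow; ring
    rw [hfin]
    exact dvd_add ih h1

private lemma ce_lemA (f u r : ℕ) : (2:ℤ)^(f-1) ∣ Tpow (2^f * u) r := by
  rcases le_or_gt f 1 with hf | hf
  · have : f - 1 = 0 := by omega
    rw [this]; simpa using one_dvd _
  · have hq : (2:ℕ)^f * u = 2^(f-1) * (2*u) := by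
      have : (2:ℕ)^f = 2^(f-1) * 2 := by
        rw [← pow_succ]; congr 1; omega
      rw [this]; ring
    have hb := ce_block (2^(f-1)) r (2*u)
    have hqc := ce_Qlem r (f-1)
    have h1 : (2:ℤ)^(f-1) ∣ ((2*u : ℕ):ℤ) * Tpow (2^(f-1)) r := by
      obtain ⟨c, hc⟩ := hqc
      refine ⟨u * c, ?_⟩
      rw [hc]
      have h2 : (2:ℤ)^(f-1) = 2^(f-1-1) * 2 := by
        rw [← pow_succ]; congr 1; omega
      rw [h2]; push_cast; ring
    have hcast : ((2^(f-1) : ℕ):ℤ) = (2:ℤ)^(f-1) := by push_cast; ring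
    rw [hq]
    have := dvd_add (hcast ▸ hb) h1
    simpa using this


private lemma ce_reflect (q r : ℕ) (hq : 1 ≤ q) (hr : 1 ≤ r) :
    ∑ i ∈ Finset.range (r+1),
        ((q:ℤ)^i * (-1)^(r-i) * ((r.choose i : ℕ):ℤ) * Tpow q (r-i))
      = Tpow q r + (q:ℤ)^r := by
  have h2 := Finset.sum_range_reflect (fun j : ℕ => ((j+1 : ℕ):ℤ)^r) q
  have hL : ∑ j ∈ Finset.range q, ((q - 1 - j + 1 : ℕ):ℤ)^r
      = ∑ j ∈ Finset.range q, ((q:ℤ) - (j:ℤ))^r := by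
    refine Finset.sum_congr rfl fun j hj => ?_
    have hj' : j < q := Finset.mem_range.mp hj
    have h5 : q - 1 - j + 1 = q - j := by omega
    rw [h5, Nat.cast_sub (by omega)]
  have hR : ∑ j ∈ Finset.range q, ((j+1 : ℕ):ℤ)^r = Tpow q r + (q:ℤ)^r := by
    have h3 := Finset.sum_range_succ' (fun j : ℕ => (j:ℤ)^r) q
    have h4 := Finset.sum_range_succ (fun j : ℕ => (j:ℤ)^r) q
    simp only [Nat.cast_zero, zero_pow (show r ≠ 0 by omega), add_zero] at h3
    unfold Tpow
    rw [← h3.symm.trans h4]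
  have h1 : ∑ j ∈ Finset.range q, ((q:ℤ) - (j:ℤ))^r = Tpow q r + (q:ℤ)^r :=
    (hL.symm.trans h2).trans hR
  calc ∑ i ∈ Finset.range (r+1),
          ((q:ℤ)^i * (-1)^(r-i) * ((r.choose i : ℕ):ℤ) * Tpow q (r-i))
      = ∑ i ∈ Finset.range (r+1), ∑ j ∈ Finset.range q,
          ((q:ℤ)^i * (-(j:ℤ))^(r-i) * ((r.choose i : ℕ):ℤ)) := by
        refine Finset.sum_congr rfl fun i _ => ?_
        unfold Tpow
        rw [Finset.mul_sum]
        refine Finset.sum_congr rfl fun j _ => ?_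
        rw [neg_pow]
        ring
    _ = ∑ j ∈ Finset.range q, ∑ i ∈ Finset.range (r+1),
          ((q:ℤ)^i * (-(j:ℤ))^(r-i) * ((r.choose i : ℕ):ℤ)) := Finset.sum_comm
    _ = ∑ j ∈ Finset.range q, ((q:ℤ) - (j:ℤ))^r := by
        refine Finset.sum_congr rfl fun j _ => ?_
        rw [sub_eq_add_neg, add_pow]
    _ = Tpow q r + (q:ℤ)^r := h1

private lemma ce_reflect2 (q m : ℕ) (hq : 1 ≤ q) (hm : Odd m) (hm1 : 1 ≤ m) :
    (q:ℤ) * ((m:ℤ)+1) * Tpow q m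
      = (∑ i ∈ Finset.range m,
          ((q:ℤ)^(i+2) * (-1)^(m-(i+1)) * (((m+1).choose (i+2) : ℕ):ℤ)
            * Tpow q (m-(i+1))))
        - (q:ℤ)^(m+1) := by
  have E0 := ce_reflect q (m+1) hq (by omega)
  rw [Finset.sum_range_succ'] at E0
  rw [Finset.sum_range_succ'] at E0
  have hsum : (∑ i ∈ Finset.range m,
        ((q:ℤ)^(i+1+1) * (-1)^(m+1-(i+1+1)) * (((m+1).choose (i+1+1) : ℕ):ℤ)
          * Tpow q (m+1-(i+1+1))))
      = (∑ i ∈ Finset.range m,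
        ((q:ℤ)^(i+2) * (-1)^(m-(i+1)) * (((m+1).choose (i+2) : ℕ):ℤ)
          * Tpow q (m-(i+1)))) := by
    refine Finset.sum_congr rfl fun i _ => ?_
    rw [show m+1-(i+1+1) = m-(i+1) from by omega]
  rw [hsum] at E0
  rw [show m + 1 - (0+1) = m from by omega, show m + 1 - 0 = m + 1 from rfl] at E0
  rw [show (-1:ℤ)^(m+1) = 1 from Even.neg_one_pow (Odd.add_one hm)] at E0
  rw [show (-1:ℤ)^m = -1 from Odd.neg_one_pow hm] at E0
  rw [show ((m+1).choose (0+1)) = m+1 from Nat.choose_one_right _] at E0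
  rw [show ((m+1).choose 0) = 1 from Nat.choose_zero_right _] at E0
  rw [show ((q:ℤ))^(0+1) = (q:ℤ) from pow_one _] at E0
  rw [show ((q:ℤ))^(0:ℕ) = 1 from pow_zero _] at E0
  rw [show ((m+1:ℕ):ℤ) = (m:ℤ)+1 from by push_cast; ring] at E0
  linear_combination -E0

private lemma ce_decomp (n : ℕ) (hn : n ≠ 0) : ∃ a b, Odd b ∧ n = 2^a * b := by
  obtain ⟨a, b, hnd, h⟩ := Nat.exists_eq_pow_mul_and_not_dvd hn 2 (by norm_num)
  exact ⟨a, b, Nat.odd_iff.mpr (Nat.two_dvd_ne_zero.mp hnd), h⟩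

private lemma ce_cop (a u : ℕ) (hu : Odd u) : Nat.Coprime (2^a) u :=
  Nat.Coprime.pow_left _ ((Nat.Prime.coprime_iff_not_dvd Nat.prime_two).mpr
    (by rw [Nat.two_dvd_ne_zero]; exact Nat.odd_iff.mp hu))

private lemma ce_choose (N i ν : ℕ) (hν : 2^ν ∣ N+1) :
    ∃ c, c ≤ i+1 ∧ (2:ℕ)^(ν - c) ∣ (N+1).choose (i+2) := by
  obtain ⟨c, y, hy, hdec⟩ := ce_decomp (i+2) (by omega)
  have hcle : c ≤ i+1 := by
    have h1 : 2^c ≤ i+2 := by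
      rw [hdec]; exact Nat.le_mul_of_pos_right _ hy.pos
    have h2 : c < 2^c := (Nat.lt_two_pow_self (n := c))
    omega
  have hid : (N+1) * (N.choose (i+1)) = (N+1).choose (i+2) * (i+2) :=
    Nat.add_one_mul_choose_eq N (i+1)
  have hd1 : 2^ν ∣ (N+1).choose (i+2) * (i+2) := by
    rw [← hid]; exact Dvd.dvd.mul_right hν _
  have hd1b : 2^ν ∣ (N+1).choose (i+2) * 2^c * y := by
    rw [mul_assoc, ← hdec]; exact hd1
  have hd2 : 2^ν ∣ (N+1).choose (i+2) * 2^c :=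
    (ce_cop ν y hy).dvd_of_dvd_mul_right hd1b
  rcases le_or_gt c ν with h | h
  · have hpow : 2^(ν-c) * 2^c = 2^ν := by rw [← pow_add]; congr 1; omega
    rw [← hpow] at hd2
    exact ⟨c, hcle, (Nat.mul_dvd_mul_iff_right (show 0 < 2^c by positivity)).mp hd2⟩
  · exact ⟨c, hcle, by rw [show ν - c = 0 from by omega, pow_zero]; exact one_dvd _⟩

private lemma ce_odd_cancel (a u : ℕ) (hu : Odd u) (x : ℤ)
    (h : (2:ℤ)^a ∣ (u:ℤ) * x) : (2:ℤ)^a ∣ x := by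
  have hcop : IsCoprime ((2:ℤ)^a) (u:ℤ) := by
    have h1 := Nat.Coprime.isCoprime (ce_cop a u hu)
    push_cast at h1; exact h1
  exact hcop.dvd_of_dvd_mul_left h

private lemma ce_lemB (f u m : ℕ) (hf : 1 ≤ f) (hu : Odd u) (hm : Odd m) (hm3 : 3 ≤ m) :
    (2:ℤ)^(2*f-2) ∣ Tpow (2^f * u) m := by
  set q := 2^f * u with hqdef
  have hq1 : 1 ≤ q := by
    have h0 := hu.pos
    have : 0 < q := by rw [hqdef]; positivity
    omega
  obtain ⟨ν, r', hr'odd, hrdec⟩ := ce_decomp (m+1) (by omega)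
  have hνm : ν ≤ m := by
    have h2 : 2^ν ≤ m+1 := by
      rw [hrdec]; exact Nat.le_mul_of_pos_right _ hr'odd.pos
    have := (Nat.lt_two_pow_self (n := ν)); omega
  have hqd : (2:ℤ)^f ∣ (q:ℤ) := by
    refine ⟨(u:ℤ), ?_⟩; rw [hqdef]; push_cast; ring
  have hterm : ∀ i ∈ Finset.range m, (2:ℤ)^(ν + (3*f-2)) ∣
      ((q:ℤ)^(i+2) * (-1)^(m-(i+1)) * (((m+1).choose (i+2) : ℕ):ℤ)
        * Tpow q (m-(i+1))) := by
    intro i _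
    obtain ⟨c, hcle, hC⟩ := ce_choose m i ν ⟨r', hrdec⟩
    have h1 : (2:ℤ)^((i+2)*f) ∣ (q:ℤ)^(i+2) := by
      have h := pow_dvd_pow_of_dvd hqd (i+2)
      rwa [← pow_mul, mul_comm f (i+2)] at h
    have h2 : (2:ℤ)^(ν - c) ∣ (((m+1).choose (i+2) : ℕ):ℤ) := by
      have := Int.natCast_dvd_natCast.mpr hC
      push_cast at this; exact this
    have h3 : (2:ℤ)^(f-1) ∣ Tpow q (m-(i+1)) := by
      rw [hqdef]; exact ce_lemA f u _
    obtain ⟨a, ha⟩ := h1; obtain ⟨b, hb⟩ := h2; obtain ⟨d, hd⟩ := h3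
    have hexp : ν + (3*f-2) ≤ (i+2)*f + (ν-c) + (f-1) := by
      have hif : i ≤ i * f := Nat.le_mul_of_pos_right _ (by omega)
      have he : (i+2)*f = i*f + 2*f := by ring
      omega
    refine dvd_trans (pow_dvd_pow 2 hexp) ⟨(-1)^(m-(i+1)) * a * b * d, ?_⟩
    rw [ha, hb, hd, pow_add, pow_add]; ring
  have hqr : (2:ℤ)^(ν + (3*f-2)) ∣ (q:ℤ)^(m+1) := by
    have h1 : (2:ℤ)^((m+1)*f) ∣ (q:ℤ)^(m+1) := by
      have h := pow_dvd_pow_of_dvd hqd (m+1)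
      rwa [← pow_mul, mul_comm f (m+1)] at h
    refine dvd_trans (pow_dvd_pow 2 ?_) h1
    have h3 : 3*(f-1) ≤ m*(f-1) := Nat.mul_le_mul_right _ (by omega)
    have e1 : (m+1)*f = m*f + f := by ring
    have e2 : m*f = m + m*(f-1) := by
      have hf' : f = 1 + (f-1) := by omega
      calc m*f = m*(1+(f-1)) := by rw [← hf']
        _ = m + m*(f-1) := by ring
    omega
  have hsum : (2:ℤ)^(ν + (3*f-2)) ∣ (q:ℤ) * ((m:ℤ)+1) * Tpow q m := by
    rw [ce_reflect2 q m hq1 hm (by omega)]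
    exact dvd_sub (Finset.dvd_sum hterm) hqr
  have hfactor : (q:ℤ) * ((m:ℤ)+1) = (2:ℤ)^(f+ν) * ((u:ℤ) * (r':ℤ)) := by
    have hcast : ((m+1:ℕ):ℤ) = (m:ℤ)+1 := by push_cast; ring
    rw [← hcast, hrdec, hqdef]; push_cast [pow_add]; ring
  rw [hfactor, mul_assoc,
    show ν + (3*f-2) = (f+ν) + (2*f-2) from by omega, pow_add] at hsum
  have hsum2 : (2:ℤ)^(2*f-2) ∣ ((u:ℤ) * (r':ℤ)) * Tpow q m :=
    (mul_dvd_mul_iff_left (a := (2:ℤ)^(f+ν)) (by positivity)).mp hsum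
  have h4 : (2:ℤ)^(2*f-2) ∣ (u:ℤ) * ((r':ℤ) * Tpow q m) := by
    rw [← mul_assoc]; exact hsum2
  exact ce_odd_cancel _ r' hr'odd _ (ce_odd_cancel _ u hu _ h4)

private lemma ce_lemB' (f u k m : ℕ) (hf : 1 ≤ f) (hu : Odd u)
    (hq : k = 2^f*u ∨ k+1 = 2^f*u) (hm : Odd m) (hm3 : 3 ≤ m) :
    (2:ℤ)^(2*f-2) ∣ Tpow (k+1) m := by
  rcases hq with hq | hq
  · have hsplit : Tpow (k+1) m = Tpow k m + (k:ℤ)^m := by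
      unfold Tpow; rw [Finset.sum_range_succ]
    rw [hsplit, hq]
    refine dvd_add (ce_lemB f u m hf hu hm hm3) ?_
    have hd : (2:ℤ)^f ∣ ((2^f*u : ℕ):ℤ) := ⟨(u:ℤ), by push_cast; ring⟩
    have h1 : (2:ℤ)^(f*m) ∣ ((2^f*u : ℕ):ℤ)^m := by
      have h := pow_dvd_pow_of_dvd hd m
      rwa [← pow_mul] at h
    refine dvd_trans (pow_dvd_pow 2 ?_) h1
    have : 3*f ≤ m*f := Nat.mul_le_mul_right _ (by omega)
    have : f*m = m*f := by ring
    omega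
  · rw [hq]
    exact ce_lemB f u m hf hu hm hm3


private lemma ce_choose_odd (L e t : ℕ) (hL : 1 ≤ L) (he : 2^e ∣ L)
    (ht : Odd t) (htL : t ≤ L) : 2^e ∣ L.choose t := by
  have h := Nat.add_one_mul_choose_eq (L-1) (t-1)
  have ht1 : 1 ≤ t := ht.pos
  rw [show L-1+1 = L from by omega, show t-1+1 = t from by omega] at h
  have hd : 2^e ∣ L.choose t * t := by
    rw [← h]; exact he.mul_right _
  exact (ce_cop e t ht).dvd_of_dvd_mul_right hd

/-- For even `ℓ ≥ 6` and a positive solution `(k, n)` of equation (1), with `w = n + k`,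
`f = ν₂(k(k+1))`, `g = ν₂(w)`, `e = ν₂(ℓ)` and `s = 2^{(2f-1)+2g+e}`, one has
`w^{ℓ-1} ≡ ℓ·w^{ℓ-2}·k(k+1) + 2ℓ·∑_{i=1}^k i^{ℓ-1} (mod s)`. -/
theorem congruence_even (ℓ k n w : ℕ) (hℓ : 6 ≤ ℓ) (heven : Even ℓ)
    (hk : 0 < k) (hn : 0 < n) (hw : w = n + k)
    (heq : ∑ i ∈ Finset.range (k + 1), (n + i) ^ ℓ =
        ∑ i ∈ Finset.Icc (k + 1) (2 * k), (n + i) ^ ℓ)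
    (f g e s : ℕ) (hf : f = padicValNat 2 (k * (k + 1)))
    (hg : g = padicValNat 2 w) (he : e = padicValNat 2 ℓ)
    (hs : s = 2 ^ ((2 * f - 1) + 2 * g + e)) :
    w ^ (ℓ - 1) ≡ ℓ * w ^ (ℓ - 2) * (k * (k + 1)) +
      2 * ℓ * ∑ i ∈ Finset.Icc 1 k, i ^ (ℓ - 1) [MOD s] := by
  haveI : Fact (Nat.Prime 2) := ⟨Nat.prime_two⟩
  have hf1 : 1 ≤ f := by
    rw [hf]
    exact one_le_padicValNat_of_dvd (by positivity) (Nat.even_mul_succ_self k).two_dvd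
  -- decomposition of the even one of k, k+1
  have hqex : ∃ u, Odd u ∧ (k = 2^f*u ∨ k+1 = 2^f*u) := by
    rcases Nat.even_or_odd k with hke | hko
    · obtain ⟨a, u, hu, hdec⟩ := ce_decomp k (by omega)
      have ha : padicValNat 2 k = a := by
        rw [hdec, padicValNat.mul (by positivity) hu.pos.ne',
          padicValNat.prime_pow,
          padicValNat.eq_zero_of_not_dvd (by
            rw [Nat.two_dvd_ne_zero]; exact Nat.odd_iff.mp hu)]
        omega
      have hk1 : padicValNat 2 (k+1) = 0 := padicValNat.eq_zero_of_not_dvd (by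
        rw [Nat.two_dvd_ne_zero]; rw [Nat.even_iff] at hke; omega)
      have hfa : f = a := by
        rw [hf, padicValNat.mul (by omega) (by omega), ha, hk1]
        omega
      exact ⟨u, hu, Or.inl (by rw [hfa]; exact hdec)⟩
    · obtain ⟨a, u, hu, hdec⟩ := ce_decomp (k+1) (by omega)
      have ha : padicValNat 2 (k+1) = a := by
        rw [hdec, padicValNat.mul (by positivity) hu.pos.ne',
          padicValNat.prime_pow,
          padicValNat.eq_zero_of_not_dvd (by
            rw [Nat.two_dvd_ne_zero]; exact Nat.odd_iff.mp hu)]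
        omega
      have hk0 : padicValNat 2 k = 0 := padicValNat.eq_zero_of_not_dvd (by
        rw [Nat.two_dvd_ne_zero]; exact Nat.odd_iff.mp hko)
      have hfa : f = a := by
        rw [hf, padicValNat.mul (by omega) (by omega), ha, hk0]
        omega
      exact ⟨u, hu, Or.inr (by rw [hfa]; exact hdec)⟩
  obtain ⟨u, hu, hqor⟩ := hqex
  have hgw : (2:ℤ)^g ∣ (w:ℤ) := by
    have h1 : (2:ℕ)^g ∣ w := by rw [hg]; exact pow_padicValNat_dvd
    have h2 := Int.natCast_dvd_natCast.mpr h1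
    push_cast at h2; exact h2
  have heL : (2:ℕ)^e ∣ ℓ := by rw [he]; exact pow_padicValNat_dvd
  have hwpos : 0 < w := by omega
  -- cast the equation
  have EA : ((∑ i ∈ Finset.range (k+1), (n+i)^ℓ : ℕ) : ℤ)
      = ∑ j ∈ Finset.range (k+1), ((w:ℤ) - (j:ℤ))^ℓ := by
    push_cast
    have h2 := Finset.sum_range_reflect (fun i : ℕ => ((n:ℤ)+(i:ℤ))^ℓ) (k+1)
    rw [← h2]
    refine Finset.sum_congr rfl fun j hj => ?_
    have hj' : j < k+1 := Finset.mem_range.mp hj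
    rw [show k+1-1-j = k-j from by omega, Nat.cast_sub (by omega), hw]
    push_cast; ring
  have hins : Finset.range (k+1) = insert 0 (Finset.Icc 1 k) := by
    ext x; simp only [Finset.mem_range, Finset.mem_insert, Finset.mem_Icc]; omega
  have EB : ((∑ i ∈ Finset.Icc (k+1) (2*k), (n+i)^ℓ : ℕ) : ℤ)
      = (∑ j ∈ Finset.range (k+1), ((w:ℤ) + (j:ℤ))^ℓ) - (w:ℤ)^ℓ := by
    have hsum1 : (∑ j ∈ Finset.range (k+1), ((w:ℤ) + (j:ℤ))^ℓ)
        = (w:ℤ)^ℓ + ∑ j ∈ Finset.Icc 1 k, ((w:ℤ) + (j:ℤ))^ℓ := by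
      rw [hins, Finset.sum_insert (by simp)]
      norm_num
    have hmap : (∑ i ∈ Finset.Icc (k+1) (2*k), (((n:ℤ)+(i:ℤ))^ℓ))
        = ∑ j ∈ Finset.Icc 1 k, ((w:ℤ) + (j:ℤ))^ℓ := by
      rw [show Finset.Icc (k+1) (2*k) = Finset.map (addLeftEmbedding k) (Finset.Icc 1 k) from by
        rw [show 2*k = k + k from by omega, Finset.map_add_left_Icc]]
      rw [Finset.sum_map]
      refine Finset.sum_congr rfl fun j hj => ?_
      rw [show (addLeftEmbedding k) j = k + j from rfl, hw]
      push_cast; ring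
    push_cast
    rw [hmap, hsum1]; ring
  have E1 : (w:ℤ)^ℓ = ∑ j ∈ Finset.range (k+1),
      (((w:ℤ)+(j:ℤ))^ℓ - ((w:ℤ)-(j:ℤ))^ℓ) := by
    have hcast := congrArg (Nat.cast : ℕ → ℤ) heq
    rw [EA, EB] at hcast
    rw [Finset.sum_sub_distrib]
    linarith [hcast]
  have E3 : (w:ℤ)^ℓ = ∑ m ∈ Finset.range (ℓ+1),
      ((w:ℤ)^m * (1 - (-1:ℤ)^(ℓ-m)) * ((ℓ.choose m : ℕ):ℤ) * Tpow (k+1) (ℓ-m)) := by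
    rw [E1]
    calc ∑ j ∈ Finset.range (k+1), (((w:ℤ)+(j:ℤ))^ℓ - ((w:ℤ)-(j:ℤ))^ℓ)
        = ∑ j ∈ Finset.range (k+1), ∑ m ∈ Finset.range (ℓ+1),
            ((w:ℤ)^m * ((1 - (-1:ℤ)^(ℓ-m)) * (j:ℤ)^(ℓ-m)) * ((ℓ.choose m : ℕ):ℤ)) := by
          refine Finset.sum_congr rfl fun j _ => ?_
          rw [sub_eq_add_neg ((w:ℤ)) ((j:ℤ)), add_pow, add_pow, ← Finset.sum_sub_distrib]
          refine Finset.sum_congr rfl fun m _ => ?_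
          rw [neg_pow]; ring
      _ = ∑ m ∈ Finset.range (ℓ+1), ∑ j ∈ Finset.range (k+1),
            ((w:ℤ)^m * ((1 - (-1:ℤ)^(ℓ-m)) * (j:ℤ)^(ℓ-m)) * ((ℓ.choose m : ℕ):ℤ)) :=
          Finset.sum_comm
      _ = ∑ m ∈ Finset.range (ℓ+1),
            ((w:ℤ)^m * (1 - (-1:ℤ)^(ℓ-m)) * ((ℓ.choose m : ℕ):ℤ) * Tpow (k+1) (ℓ-m)) := by
          refine Finset.sum_congr rfl fun m _ => ?_
          unfold Tpow
          rw [Finset.mul_sum]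
          refine Finset.sum_congr rfl fun j _ => ?_
          ring
  have E4 := E3
  rw [Finset.sum_range_succ'] at E4
  rw [show (1 - (-1:ℤ)^(ℓ-0)) = 0 from by
    rw [Nat.sub_zero, Even.neg_one_pow heven]; ring] at E4
  simp only [mul_zero, zero_mul, add_zero] at E4
  have hWne : ((w:ℤ)) ≠ 0 := by exact_mod_cast hwpos.ne'
  have E6 : (w:ℤ)^(ℓ-1) = ∑ m ∈ Finset.range ℓ,
      ((w:ℤ)^m * (1 - (-1:ℤ)^(ℓ-(m+1))) * ((ℓ.choose (m+1) : ℕ):ℤ)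
        * Tpow (k+1) (ℓ-(m+1))) := by
    apply mul_left_cancel₀ hWne
    rw [← pow_succ', show ℓ-1+1 = ℓ from by omega, E4, Finset.mul_sum]
    refine Finset.sum_congr rfl fun m _ => ?_
    rw [pow_succ]; ring
  -- extract the two special terms
  have h0mem : (0:ℕ) ∈ Finset.range ℓ := by simp only [Finset.mem_range]; omega
  have hl2mem : (ℓ-2) ∈ (Finset.range ℓ).erase 0 := by
    simp only [Finset.mem_erase, Finset.mem_range]; omega
  rw [← Finset.add_sum_erase _ _ h0mem] at E6
  rw [← Finset.add_sum_erase _ _ hl2mem] at E6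
  -- value of the term at 0
  have hΨ0 : (w:ℤ)^0 * (1 - (-1:ℤ)^(ℓ-(0+1))) * ((ℓ.choose (0+1) : ℕ):ℤ)
        * Tpow (k+1) (ℓ-(0+1))
      = 2 * (ℓ:ℤ) * Tpow (k+1) (ℓ-1) := by
    rw [show ℓ-(0+1) = ℓ-1 from rfl,
      show ℓ.choose (0+1) = ℓ from Nat.choose_one_right ℓ,
      show (-1:ℤ)^(ℓ-1) = -1 from Odd.neg_one_pow
        (Nat.Even.sub_odd (by omega) heven odd_one),
      pow_zero]
    ring
  -- Gauss sum
  have hT1 : 2 * Tpow (k+1) 1 = (k:ℤ) * ((k:ℤ)+1) := by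
    unfold Tpow
    have h := Finset.sum_range_id_mul_two (k+1)
    have h2 : ((∑ i ∈ Finset.range (k+1), i : ℕ) : ℤ) * 2 = ((k:ℤ)+1) * (k:ℤ) := by
      exact_mod_cast congrArg (Nat.cast : ℕ → ℤ)
        (by rw [h, Nat.add_sub_cancel] : (∑ i ∈ Finset.range (k+1), i) * 2 = (k+1) * k)
    have h3 : (∑ i ∈ Finset.range (k+1), (i:ℤ)^1)
        = ((∑ i ∈ Finset.range (k+1), i : ℕ) : ℤ) := by
      push_cast; simp [pow_one]
    rw [h3]; linarith [h2]
  -- value of the term at ℓ-2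
  have hΨ2 : (w:ℤ)^(ℓ-2) * (1 - (-1:ℤ)^(ℓ-(ℓ-2+1))) * ((ℓ.choose (ℓ-2+1) : ℕ):ℤ)
        * Tpow (k+1) (ℓ-(ℓ-2+1))
      = (ℓ:ℤ) * (w:ℤ)^(ℓ-2) * ((k:ℤ) * ((k:ℤ)+1)) := by
    rw [show ℓ-(ℓ-2+1) = 1 from by omega, show ℓ-2+1 = ℓ-1 from by omega,
      show ℓ.choose (ℓ-1) = ℓ from by
        rw [show ℓ-1 = ℓ - 1 from rfl, Nat.choose_symm (by omega), Nat.choose_one_right],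
      pow_one]
    linear_combination ((ℓ:ℤ) * (w:ℤ)^(ℓ-2)) * hT1
  rw [hΨ0, hΨ2] at E6
  -- divisibility of the rest
  have hrest : (2:ℤ)^((2*f-1)+2*g+e) ∣
      ∑ m ∈ ((Finset.range ℓ).erase 0).erase (ℓ-2),
        ((w:ℤ)^m * (1 - (-1:ℤ)^(ℓ-(m+1))) * ((ℓ.choose (m+1) : ℕ):ℤ)
          * Tpow (k+1) (ℓ-(m+1))) := by
    refine Finset.dvd_sum fun m hm => ?_
    have hm2 := Finset.mem_erase.mp hm
    have hm3 := Finset.mem_erase.mp hm2.2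
    have hmlt : m < ℓ := Finset.mem_range.mp hm3.2
    have hmne2 : m ≠ ℓ-2 := hm2.1
    have hmne0 : m ≠ 0 := hm3.1
    rcases Nat.even_or_odd (ℓ-(m+1)) with hpar | hpar
    · rw [Even.neg_one_pow hpar]
      simp
    · have h1 := Nat.odd_iff.mp hpar
      have h2 := Nat.even_iff.mp heven
      have hme : m % 2 = 0 := by omega
      have hm2le : 2 ≤ m := by omega
      have hs3 : 3 ≤ ℓ-(m+1) := by omega
      have P1 : (2:ℤ)^(2*g) ∣ (w:ℤ)^m := by
        have ha : ((2:ℤ)^g)^2 ∣ (w:ℤ)^2 := pow_dvd_pow_of_dvd hgw 2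
        have hb : ((w:ℤ))^2 ∣ (w:ℤ)^m := pow_dvd_pow _ hm2le
        have hc := dvd_trans ha hb
        rwa [← pow_mul, mul_comm g 2] at hc
      have P2 : (2:ℤ)^e ∣ ((ℓ.choose (m+1) : ℕ):ℤ) := by
        have hd := ce_choose_odd ℓ e (m+1) (by omega) heL
          (by rw [Nat.odd_iff]; omega) (by omega)
        have h5 := Int.natCast_dvd_natCast.mpr hd
        push_cast at h5; exact h5
      have P3 : (2:ℤ)^(2*f-2) ∣ Tpow (k+1) (ℓ-(m+1)) :=
        ce_lemB' f u k _ hf1 hu hqor hpar hs3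
      obtain ⟨a, ha⟩ := P1; obtain ⟨b, hb⟩ := P2; obtain ⟨d, hd⟩ := P3
      rw [show (1 - (-1:ℤ)^(ℓ-(m+1))) = 2 from by
          rw [Odd.neg_one_pow hpar]; ring,
        ha, hb, hd, show (2*f-1)+2*g+e = 2*g + 1 + e + (2*f-2) from by omega]
      exact ⟨a*b*d, by rw [pow_add, pow_add, pow_add]; ring⟩
  -- conclusion
  have hIcc : (∑ i ∈ Finset.Icc 1 k, (i:ℤ)^(ℓ-1)) = Tpow (k+1) (ℓ-1) := by
    unfold Tpow
    rw [hins, Finset.sum_insert (by simp)]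
    rw [Nat.cast_zero, zero_pow (show ℓ-1 ≠ 0 from by omega), zero_add]
  rw [Nat.modEq_iff_dvd]
  push_cast
  rw [hs]
  push_cast
  have hkey : ((ℓ:ℤ) * (w:ℤ)^(ℓ-2) * ((k:ℤ) * ((k:ℤ)+1))
        + 2 * (ℓ:ℤ) * (∑ i ∈ Finset.Icc 1 k, (i:ℤ)^(ℓ-1))) - (w:ℤ)^(ℓ-1)
      = -(∑ m ∈ ((Finset.range ℓ).erase 0).erase (ℓ-2),
          ((w:ℤ)^m * (1 - (-1:ℤ)^(ℓ-(m+1))) * ((ℓ.choose (m+1) : ℕ):ℤ)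
            * Tpow (k+1) (ℓ-(m+1)))) := by
    rw [hIcc]
    linear_combination -E6
  rw [hkey]
  exact dvd_neg.mpr hrest
end

section
/- Let ℓ ≥ 5 be odd, let k, n be positive integers satisfying ∑_{i=0}^{k} (n+i)^ℓ = ∑_{i=k+1}^{2k} (n+i)^ℓ, set w = n + k, f = ν₂(k(k+1)), g = ν₂(w), and s = 2^{(2f−1)+2g}. Then w^ℓ ≡ ℓ·w^{ℓ−1}·k(k+1) + 2·∑_{i=1}^{k} i^ℓ (mod s). -/
open Finset


/-- `Spow e K = 1^e + 2^e + ... + K^e` as an integer. -/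
private def Spow (e K : ℕ) : ℤ := ∑ i ∈ range K, ((i : ℤ) + 1) ^ e

private lemma sq_dvd (a b : ℤ) : ∀ n : ℕ,
    b ^ 2 ∣ (a + b) ^ (n + 1) - a ^ (n + 1) - (n + 1) * b * a ^ n
  | 0 => by ring_nf; simp
  | (n + 1) => by
    obtain ⟨c, hc⟩ := sq_dvd a b n
    refine ⟨(a + b) * c + (n + 1) * a ^ n, ?_⟩
    have hc' : (a + b) ^ (n + 1) - a ^ (n + 1) - ((n : ℤ) + 1) * b * a ^ n = b ^ 2 * c := by
      push_cast at hc ⊢; linarith [hc]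
    push_cast
    linear_combination (a + b) * hc'

private lemma block_dvd (d L e : ℕ) (a : ℤ) (h : (d : ℤ) ∣ a) :
    (d : ℤ) ∣ (∑ i ∈ range L, (a + ((i : ℤ) + 1)) ^ e) - Spow e L := by
  unfold Spow
  rw [← Finset.sum_sub_distrib]
  refine Finset.dvd_sum fun i _ => ?_
  refine dvd_trans ?_ (sub_dvd_pow_sub_pow (a + ((i : ℤ) + 1)) ((i : ℤ) + 1) e)
  have h2 : (a + ((i : ℤ) + 1)) - ((i : ℤ) + 1) = a := by ring
  rw [h2]; exact h

private lemma Spow_add (e A B : ℕ) :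
    Spow e (A + B) = Spow e A + ∑ i ∈ range B, ((A : ℤ) + ((i : ℤ) + 1)) ^ e := by
  unfold Spow
  rw [Finset.sum_range_add]
  congr 1

private lemma lemA (e : ℕ) : ∀ t : ℕ, (2 : ℤ) ^ (t - 1) ∣ Spow e (2 ^ t) := by
  intro t
  induction t with
  | zero => simp
  | succ t ih =>
    obtain ⟨c, hc⟩ := block_dvd (2 ^ t) (2 ^ t) e ((2 ^ t : ℕ) : ℤ) dvd_rfl
    have h2 : Spow e (2 ^ (t + 1)) = 2 * Spow e (2 ^ t) + ((2 ^ t : ℕ) : ℤ) * c := by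
      have h3 := Spow_add e (2 ^ t) (2 ^ t)
      rw [← two_mul, ← pow_succ'] at h3
      rw [h3]
      linarith [hc]
    rcases Nat.eq_zero_or_pos t with rfl | ht
    · simp
    obtain ⟨c', hc'⟩ := ih
    rw [h2, hc']
    have ht1 : t - 1 + 1 = t := by omega
    refine dvd_add ⟨c', ?_⟩ ⟨c, by push_cast; ring⟩
    have hpow : (2 : ℤ) ^ (t + 1 - 1) = 2 * 2 ^ (t - 1) := by
      rw [show t + 1 - 1 = (t - 1) + 1 by omega, pow_succ]; ring
    rw [hpow]; ring

private lemma lemB (e t : ℕ) : ∀ u : ℕ, (2 : ℤ) ^ (t - 1) ∣ Spow e (2 ^ t * u) := by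
  intro u
  induction u with
  | zero => simp [Spow]
  | succ u ih =>
    obtain ⟨c, hc⟩ := block_dvd (2 ^ t) (2 ^ t) e ((2 ^ t * u : ℕ) : ℤ) (by push_cast; exact ⟨u, rfl⟩)
    have h2 : Spow e (2 ^ t * (u + 1)) = Spow e (2 ^ t * u) + Spow e (2 ^ t) + ((2 ^ t : ℕ) : ℤ) * c := by
      have h3 := Spow_add e (2 ^ t * u) (2 ^ t)
      rw [← Nat.mul_succ] at h3
      rw [h3]; linarith [hc]
    rw [h2]
    refine dvd_add (dvd_add ih (lemA e t)) ?_
    refine dvd_mul_of_dvd_left ?_ c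
    push_cast
    exact pow_dvd_pow 2 (by omega)

private lemma lemB' (e t K : ℕ) (h : 2 ^ t ∣ K) : (2 : ℤ) ^ (t - 1) ∣ Spow e K := by
  obtain ⟨u, rfl⟩ := h
  exact lemB e t u


private lemma refl1 (m K : ℕ) :
    ∑ i ∈ range K, ((K : ℤ) + 1 - ((i : ℤ) + 1)) ^ m = Spow m K := by
  have h := Finset.sum_range_reflect (fun i => ((i : ℤ) + 1) ^ m) K
  unfold Spow
  rw [← h]
  refine Finset.sum_congr rfl fun i hi => ?_
  have hi' : i < K := Finset.mem_range.1 hi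
  have hc : ((K - 1 - i : ℕ) : ℤ) = (K : ℤ) - 1 - i := by omega
  rw [hc]; ring_nf

private lemma refl0 (m K : ℕ) (hm : m ≠ 0) :
    ∑ i ∈ range K, ((K : ℤ) - ((i : ℤ) + 1)) ^ m = Spow m K - (K : ℤ) ^ m := by
  have h := Finset.sum_range_reflect (fun i => (i : ℤ) ^ m) K
  have h2 : ∑ i ∈ range K, ((K : ℤ) - ((i : ℤ) + 1)) ^ m = ∑ i ∈ range K, (i : ℤ) ^ m := by
    rw [← h]
    refine Finset.sum_congr rfl fun i hi => ?_
    have hi' : i < K := Finset.mem_range.1 hi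
    have hc : ((K - 1 - i : ℕ) : ℤ) = (K : ℤ) - 1 - i := by omega
    rw [hc]; ring_nf
  rw [h2]
  have h3 : ∑ i ∈ range (K + 1), (i : ℤ) ^ m = Spow m K + 0 := by
    rw [Finset.sum_range_succ']
    have hz : ((0 : ℕ) : ℤ) ^ m = 0 := by simp [zero_pow hm]
    rw [hz]
    congr 1
  have h4 : ∑ i ∈ range (K + 1), (i : ℤ) ^ m = (∑ i ∈ range K, (i : ℤ) ^ m) + (K : ℤ) ^ m := by
    rw [Finset.sum_range_succ]
  rw [h4] at h3; linarith

private lemma lemC (e f k : ℕ) (hk : 0 < k) (he2 : 2 ≤ e) (hodd : Odd (e + 1))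
    (hfk : 2 ^ f ∣ k * (k + 1)) :
    (2 : ℤ) ^ (2 * f - 1) ∣ 2 * Spow (e + 1) k := by
  rcases Nat.eq_zero_or_pos f with rfl | hf1
  · simpa using one_dvd _
  have he : Even e := Nat.not_odd_iff_even.mp (Nat.odd_add_one.mp hodd)
  have hterm : ∀ b : ℤ, ∀ i : ℕ, b ^ 2 ∣
      (b - ((i : ℤ) + 1)) ^ (e + 1) + ((i : ℤ) + 1) ^ (e + 1) - ((e : ℤ) + 1) * b * ((i : ℤ) + 1) ^ e := by
    intro b i
    have h := sq_dvd (-((i : ℤ) + 1)) b e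
    have heq : (-((i : ℤ) + 1) + b) ^ (e + 1) - (-((i : ℤ) + 1)) ^ (e + 1)
          - ((e : ℤ) + 1) * b * (-((i : ℤ) + 1)) ^ e
        = (b - ((i : ℤ) + 1)) ^ (e + 1) + ((i : ℤ) + 1) ^ (e + 1)
          - ((e : ℤ) + 1) * b * ((i : ℤ) + 1) ^ e := by
      rw [neg_add_eq_sub, hodd.neg_pow, he.neg_pow]; ring
    rw [heq] at h
    exact_mod_cast h
  rcases Nat.even_or_odd k with hke | hko
  · -- k even : 2^f ∣ k
    have hcop : Nat.Coprime (2 ^ f) (k + 1) :=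
      Nat.Coprime.pow_left _ (Nat.coprime_two_left.mpr (Even.add_one hke))
    have hdk : 2 ^ f ∣ k := (Nat.Coprime.dvd_of_dvd_mul_right hcop hfk)
    have hsum := Finset.dvd_sum (fun i (_ : i ∈ range k) => hterm (k : ℤ) i)
    rw [Finset.sum_sub_distrib, Finset.sum_add_distrib] at hsum
    have hA : ∑ i ∈ range k, ((k : ℤ) - ((i : ℤ) + 1)) ^ (e + 1)
        = Spow (e + 1) k - (k : ℤ) ^ (e + 1) := refl0 (e + 1) k (by omega)
    have hC : ∑ i ∈ range k, ((e : ℤ) + 1) * (k : ℤ) * ((i : ℤ) + 1) ^ e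
        = ((e : ℤ) + 1) * (k : ℤ) * Spow e k := by rw [← Finset.mul_sum]; rfl
    rw [hA, hC] at hsum
    have hSB : ∑ i ∈ range k, ((i : ℤ) + 1) ^ (e + 1) = Spow (e + 1) k := rfl
    rw [hSB] at hsum
    obtain ⟨c, hc⟩ := hsum
    have hkey : 2 * Spow (e + 1) k
        = (k : ℤ) ^ 2 * c + (k : ℤ) ^ (e + 1) + ((e : ℤ) + 1) * ((k : ℤ) * Spow e k) := by
      linarith [hc]
    rw [hkey]
    have hdkz : (2 : ℤ) ^ f ∣ (k : ℤ) := by exact_mod_cast Int.natCast_dvd_natCast.mpr hdk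
    have hk2 : (2 : ℤ) ^ (2 * f) ∣ (k : ℤ) ^ 2 := by
      have := pow_dvd_pow_of_dvd hdkz 2
      rwa [← pow_mul, Nat.mul_comm] at this
    refine dvd_add (dvd_add ?_ ?_) ?_
    · exact dvd_mul_of_dvd_left ((pow_dvd_pow 2 (by omega)).trans hk2) c
    · have : (k : ℤ) ^ (e + 1) = (k : ℤ) ^ 2 * (k : ℤ) ^ (e - 1) := by
        rw [← pow_add]; congr 1; omega
      rw [this]
      exact dvd_mul_of_dvd_left ((pow_dvd_pow 2 (by omega)).trans hk2) _
    · refine dvd_mul_of_dvd_right ?_ _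
      have h1 : (2 : ℤ) ^ (f - 1) ∣ Spow e k := lemB' e f k hdk
      have := mul_dvd_mul hdkz h1
      rwa [← pow_add, show f + (f - 1) = 2 * f - 1 by omega] at this
  · -- k odd : 2^f ∣ k + 1
    have hcop : Nat.Coprime (2 ^ f) k :=
      Nat.Coprime.pow_left _ (Nat.coprime_two_left.mpr hko)
    have hdk : 2 ^ f ∣ k + 1 := (Nat.Coprime.dvd_of_dvd_mul_left hcop hfk)
    have hsum := Finset.dvd_sum (fun i (_ : i ∈ range k) => hterm ((k : ℤ) + 1) i)
    rw [Finset.sum_sub_distrib, Finset.sum_add_distrib] at hsum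
    have hA : ∑ i ∈ range k, ((k : ℤ) + 1 - ((i : ℤ) + 1)) ^ (e + 1) = Spow (e + 1) k :=
      refl1 (e + 1) k
    have hC : ∑ i ∈ range k, ((e : ℤ) + 1) * ((k : ℤ) + 1) * ((i : ℤ) + 1) ^ e
        = ((e : ℤ) + 1) * ((k : ℤ) + 1) * Spow e k := by rw [← Finset.mul_sum]; rfl
    rw [hA, hC] at hsum
    have hSB : ∑ i ∈ range k, ((i : ℤ) + 1) ^ (e + 1) = Spow (e + 1) k := rfl
    rw [hSB] at hsum
    obtain ⟨c, hc⟩ := hsum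
    have hkey : 2 * Spow (e + 1) k
        = ((k : ℤ) + 1) ^ 2 * c + ((e : ℤ) + 1) * (((k : ℤ) + 1) * Spow e k) := by
      linarith [hc]
    rw [hkey]
    have hdkz : (2 : ℤ) ^ f ∣ ((k : ℤ) + 1) := by exact_mod_cast Int.natCast_dvd_natCast.mpr hdk
    have hk2 : (2 : ℤ) ^ (2 * f) ∣ ((k : ℤ) + 1) ^ 2 := by
      have := pow_dvd_pow_of_dvd hdkz 2
      rwa [← pow_mul, Nat.mul_comm] at this
    refine dvd_add ?_ ?_
    · exact dvd_mul_of_dvd_left ((pow_dvd_pow 2 (by omega)).trans hk2) c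
    · refine dvd_mul_of_dvd_right ?_ _
      have hSk : (2 : ℤ) ^ (f - 1) ∣ Spow e k := by
        have h1 : (2 : ℤ) ^ (f - 1) ∣ Spow e (k + 1) := lemB' e f (k + 1) hdk
        have h2 : Spow e (k + 1) = Spow e k + ((k : ℤ) + 1) ^ e := by
          unfold Spow; rw [Finset.sum_range_succ]
        have h3 : (2 : ℤ) ^ (f - 1) ∣ ((k : ℤ) + 1) ^ e :=
          ((pow_dvd_pow 2 (by omega : f - 1 ≤ f)).trans hdkz).trans (dvd_pow_self _ (by omega))
        have := dvd_sub h1 h3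
        rwa [h2, add_sub_cancel_right] at this
      have := mul_dvd_mul hdkz hSk
      rwa [← pow_add, show f + (f - 1) = 2 * f - 1 by omega] at this


private lemma gauss (k : ℕ) : 2 * Spow 1 k = (k : ℤ) * ((k : ℤ) + 1) := by
  induction k with
  | zero => simp [Spow]
  | succ k ih =>
    unfold Spow at ih ⊢
    rw [Finset.sum_range_succ]
    simp only [pow_one] at ih ⊢
    push_cast
    linarith

/-- For odd `ℓ ≥ 5` and a positive solution `(k, n)` of equation (1), with `w = n + k`,
`f = ν₂(k(k+1))`, `g = ν₂(w)` and `s = 2^{(2f-1)+2g}`, one has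
`w^ℓ ≡ ℓ·w^{ℓ-1}·k(k+1) + 2·∑_{i=1}^k i^ℓ (mod s)`. -/
theorem congruence_odd (ℓ k n w : ℕ) (hℓ : 5 ≤ ℓ) (hodd : Odd ℓ)
    (hk : 0 < k) (hn : 0 < n) (hw : w = n + k)
    (heq : ∑ i ∈ Finset.range (k + 1), (n + i) ^ ℓ =
        ∑ i ∈ Finset.Icc (k + 1) (2 * k), (n + i) ^ ℓ)
    (f g s : ℕ) (hf : f = padicValNat 2 (k * (k + 1)))
    (hg : g = padicValNat 2 w)
    (hs : s = 2 ^ ((2 * f - 1) + 2 * g)) :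
    w ^ ℓ ≡ ℓ * w ^ (ℓ - 1) * (k * (k + 1)) +
      2 * ∑ i ∈ Finset.Icc 1 k, i ^ ℓ [MOD s] := by
  have hk1 : 0 < k * (k + 1) := by positivity
  have hwpos : 0 < w := by omega
  have hf1 : 1 ≤ f := by
    rw [hf]
    exact one_le_padicValNat_of_dvd hk1.ne' (Nat.even_mul_succ_self k).two_dvd
  have hfk : 2 ^ f ∣ k * (k + 1) := by rw [hf]; exact pow_padicValNat_dvd
  have hgw : 2 ^ g ∣ w := by rw [hg]; exact pow_padicValNat_dvd
  set W : ℤ := (w : ℤ) with hW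
  -- step 1 : the basic identity
  have h1 : ((∑ i ∈ Finset.range (k + 1), (n + i) ^ ℓ : ℕ) : ℤ)
      = W ^ ℓ + ∑ i ∈ range k, (W - ((i : ℤ) + 1)) ^ ℓ := by
    push_cast
    have hr := Finset.sum_range_reflect (fun j => (W - (j : ℤ)) ^ ℓ) (k + 1)
    have e1 : ∑ i ∈ range (k + 1), ((n : ℤ) + (i : ℤ)) ^ ℓ
        = ∑ j ∈ range (k + 1), (W - ((k + 1 - 1 - j : ℕ) : ℤ)) ^ ℓ := by
      refine Finset.sum_congr rfl fun i hi => ?_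
      have hi' : i < k + 1 := Finset.mem_range.1 hi
      congr 1
      simp only [hW]
      omega
    rw [e1, hr, Finset.sum_range_succ']
    push_cast
    ring
  have h2 : ((∑ i ∈ Finset.Icc (k + 1) (2 * k), (n + i) ^ ℓ : ℕ) : ℤ)
      = ∑ i ∈ range k, (W + ((i : ℤ) + 1)) ^ ℓ := by
    rw [← Finset.Ico_add_one_right_eq_Icc, Finset.sum_Ico_eq_sum_range]
    push_cast
    refine Finset.sum_congr (by congr 1; omega) fun i hi => ?_
    congr 1
    simp only [hW]
    push_cast
    omega
  have hZ := congrArg (Nat.cast : ℕ → ℤ) heq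
  rw [h1, h2] at hZ
  have key : W ^ ℓ = ∑ i ∈ range k,
      ((W + ((i : ℤ) + 1)) ^ ℓ - (W - ((i : ℤ) + 1)) ^ ℓ) := by
    rw [Finset.sum_sub_distrib]
    linarith
  -- step 2 : binomial expansion
  have expand : ∀ y : ℤ, (W + y) ^ ℓ - (W - y) ^ ℓ
      = ∑ m ∈ range (ℓ + 1),
          (W ^ m * y ^ (ℓ - m) * ((1 - (-1 : ℤ) ^ (ℓ - m)) * (ℓ.choose m))) := by
    intro y
    rw [sub_eq_add_neg W y, add_pow, add_pow, ← Finset.sum_sub_distrib]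
    exact Finset.sum_congr rfl fun m _ => by rw [neg_pow]; ring
  have key2 : W ^ ℓ = ∑ m ∈ range (ℓ + 1),
      (W ^ m * ((1 - (-1 : ℤ) ^ (ℓ - m)) * (ℓ.choose m)) * Spow (ℓ - m) k) := by
    rw [key, Finset.sum_congr rfl (fun i (_ : i ∈ range k) => expand ((i : ℤ) + 1)),
      Finset.sum_comm]
    refine Finset.sum_congr rfl fun m _ => ?_
    unfold Spow
    rw [Finset.mul_sum]
    exact Finset.sum_congr rfl fun i _ => by ring
  -- step 3 : reduce goal to divisibility
  rw [Nat.modEq_iff_dvd]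
  have hIcc : (∑ x ∈ Finset.Icc 1 k, (x : ℤ) ^ ℓ) = Spow ℓ k := by
    rw [← Finset.Ico_add_one_right_eq_Icc, Finset.sum_Ico_eq_sum_range]
    unfold Spow
    refine Finset.sum_congr (by congr 1) fun i _ => by push_cast; ring
  push_cast
  rw [hIcc]
  rw [key2]
  set T : ℕ → ℤ := fun m =>
    W ^ m * ((1 - (-1 : ℤ) ^ (ℓ - m)) * (ℓ.choose m)) * Spow (ℓ - m) k with hT
  have hmem1 : ℓ - 1 ∈ range (ℓ + 1) := by simp
  rw [← Finset.add_sum_erase _ T hmem1]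
  have hmem0 : 0 ∈ (range (ℓ + 1)).erase (ℓ - 1) := by
    simp [Finset.mem_erase]
    omega
  rw [← Finset.add_sum_erase _ T hmem0]
  have hT1 : T (ℓ - 1) = (ℓ : ℤ) * W ^ (ℓ - 1) * ((k : ℤ) * ((k : ℤ) + 1)) := by
    simp only [hT]
    rw [show ℓ - (ℓ - 1) = 1 by omega]
    rw [show ℓ.choose (ℓ - 1) = ℓ by
      rw [Nat.choose_symm (by omega : 1 ≤ ℓ), Nat.choose_one_right]]
    have hg2 := gauss k
    push_cast
    linear_combination ((ℓ : ℤ) * W ^ (ℓ - 1)) * hg2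
  have hT0 : T 0 = 2 * Spow ℓ k := by
    simp only [hT]
    rw [Nat.sub_zero, hodd.neg_one_pow, Nat.choose_zero_right]
    push_cast; ring
  rw [hT1, hT0]
  have hrw : (ℓ : ℤ) * W ^ (ℓ - 1) * ((k : ℤ) * ((k : ℤ) + 1)) + 2 * Spow ℓ k -
      ((ℓ : ℤ) * W ^ (ℓ - 1) * ((k : ℤ) * ((k : ℤ) + 1)) + (2 * Spow ℓ k +
        ∑ m ∈ ((range (ℓ + 1)).erase (ℓ - 1)).erase 0, T m))
      = -(∑ m ∈ ((range (ℓ + 1)).erase (ℓ - 1)).erase 0, T m) := by ring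
  rw [hrw, dvd_neg]
  refine Finset.dvd_sum fun m hm => ?_
  have hm0 : m ≠ 0 := (Finset.mem_erase.1 hm).1
  have hm1 : m ≠ ℓ - 1 := (Finset.mem_erase.1 (Finset.mem_erase.1 hm).2).1
  have hmr : m < ℓ + 1 :=
    Finset.mem_range.1 (Finset.mem_erase.1 (Finset.mem_erase.1 hm).2).2
  simp only [hT]
  rcases Nat.even_or_odd (ℓ - m) with he | ho
  · rw [he.neg_one_pow]
    simp
  · -- odd case
    have hme : Even m := by
      have h3 : Even (ℓ - (ℓ - m)) := Nat.Odd.sub_odd hodd ho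
      rwa [show ℓ - (ℓ - m) = m by omega] at h3
    have hm2 : 2 ≤ m := by
      obtain ⟨j, hj⟩ := hme; omega
    have he3 : 3 ≤ ℓ - m := by
      obtain ⟨j, hj⟩ := ho; omega
    have hdW : (2 : ℤ) ^ (2 * g) ∣ W ^ m := by
      have hgz : (2 : ℤ) ^ g ∣ W := by rw [hW]; exact_mod_cast Int.natCast_dvd_natCast.mpr hgw
      have := pow_dvd_pow_of_dvd hgz 2
      rw [← pow_mul, Nat.mul_comm] at this
      exact this.trans (pow_dvd_pow W hm2)
    have hdS : (2 : ℤ) ^ (2 * f - 1) ∣ 2 * Spow (ℓ - m) k := by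
      have := lemC (ℓ - m - 1) f k hk (by omega) (by rw [show ℓ - m - 1 + 1 = ℓ - m by omega]; exact ho) hfk
      rwa [show ℓ - m - 1 + 1 = ℓ - m by omega] at this
    have hprod := mul_dvd_mul hdW hdS
    rw [← pow_add] at hprod
    have hsz : (s : ℤ) = 2 ^ (2 * g + (2 * f - 1)) := by
      rw [hs]; push_cast; rw [Nat.add_comm]
    rw [hsz]
    have heq2 : W ^ m * ((1 - (-1 : ℤ) ^ (ℓ - m)) * (ℓ.choose m)) * Spow (ℓ - m) k
        = (W ^ m * (2 * Spow (ℓ - m) k)) * (ℓ.choose m) := by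
      rw [ho.neg_one_pow]; ring
    rw [heq2]
    exact hprod.mul_right _
end

section
/- Let ℓ ≥ 3 and let k, n be positive integers satisfying ∑_{i=0}^{k} (n+i)^ℓ = ∑_{i=k+1}^{2k} (n+i)^ℓ, and set w = n + k, K = k(k+1), a = (ℓ−1)(ℓ−2)/(12ℓ). Then w ≥ ℓK + (11/12)·a (an inequality of real numbers). -/
open Finset

/-- Binomial expansion of the difference `(x+y)^m - (x-y)^m`. -/
lemma expand_diff (x y : ℝ) (m : ℕ) :
    (x + y) ^ m - (x - y) ^ m
      = ∑ i ∈ range (m + 1),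
          (1 - (-1 : ℝ) ^ i) * y ^ i * x ^ (m - i) * (m.choose i) := by
  have h1 : (x + y) ^ m = ∑ i ∈ range (m + 1), y ^ i * x ^ (m - i) * (m.choose i) := by
    rw [add_comm x y]; exact add_pow y x m
  have h2 : (x - y) ^ m = ∑ i ∈ range (m + 1), (-y) ^ i * x ^ (m - i) * (m.choose i) := by
    rw [sub_eq_neg_add]; exact add_pow (-y) x m
  rw [h1, h2, ← Finset.sum_sub_distrib]
  refine Finset.sum_congr rfl fun i _ => ?_
  rw [neg_pow]
  ring

lemma term_nonneg (x y : ℝ) (hx : 0 ≤ x) (hy : 0 ≤ y) (m i : ℕ) :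
    0 ≤ (1 - (-1 : ℝ) ^ i) * y ^ i * x ^ (m - i) * (m.choose i) := by
  have h : (-1 : ℝ) ^ i ≤ 1 := by
    rcases Nat.even_or_odd i with h | h
    · rw [h.neg_one_pow]
    · rw [h.neg_one_pow]; norm_num
  have : 0 ≤ 1 - (-1 : ℝ) ^ i := by linarith
  positivity

lemma diff_lower {x y : ℝ} (hx : 0 ≤ x) (hy : 0 ≤ y) {m : ℕ} (hm : 3 ≤ m) :
    2 * m * y * x ^ (m - 1) + 2 * (m.choose 3) * y ^ 3 * x ^ (m - 3)
      ≤ (x + y) ^ m - (x - y) ^ m := by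
  rw [expand_diff]
  have hsub : ({1, 3} : Finset ℕ) ⊆ range (m + 1) := by
    intro i hi
    fin_cases hi <;> simp <;> omega
  have h := Finset.sum_le_sum_of_subset_of_nonneg hsub
    (fun i _ _ => term_nonneg x y hx hy m i)
  calc 2 * m * y * x ^ (m - 1) + 2 * (m.choose 3) * y ^ 3 * x ^ (m - 3)
      = ∑ i ∈ ({1, 3} : Finset ℕ),
          (1 - (-1 : ℝ) ^ i) * y ^ i * x ^ (m - i) * (m.choose i) := by
        rw [Finset.sum_pair (by norm_num : (1 : ℕ) ≠ 3)]
        norm_num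
        ring
    _ ≤ _ := h

/-- auxiliary coefficient sequence used for the upper bound -/
noncomputable def ucoef (i : ℕ) : ℝ :=
  if i = 1 then 1 else if i = 3 then 1/24 else if 5 ≤ i then (1/120) * (1/2 : ℝ) ^ (i - 1) else 0

lemma ucoef_nonneg (i : ℕ) : 0 ≤ ucoef i := by
  unfold ucoef
  split_ifs <;> positivity

lemma ucoef_sum_le (M : ℕ) : ∑ i ∈ range M, ucoef i ≤ 1001 / 960 := by
  rcases le_or_gt M 5 with hM | hM
  · interval_cases M <;> norm_num [Finset.sum_range_succ, ucoef]
  · obtain ⟨t, rfl⟩ : ∃ t, M = 5 + t := ⟨M - 5, by omega⟩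
    rw [Finset.sum_range_add]
    have h1 : ∑ i ∈ range 5, ucoef i = 1 + 1/24 := by
      norm_num [Finset.sum_range_succ, ucoef]
    have h2 : ∑ i ∈ range t, ucoef (5 + i) = (1/1920) * ∑ i ∈ range t, (1/2 : ℝ) ^ i := by
      rw [Finset.mul_sum]
      refine Finset.sum_congr rfl fun i _ => ?_
      have e1 : ¬(5 + i = 1) := by omega
      have e2 : ¬(5 + i = 3) := by omega
      have e3 : 5 ≤ 5 + i := by omega
      have e4 : 5 + i - 1 = 4 + i := by omega
      rw [ucoef, if_neg e1, if_neg e2, if_pos e3, e4, pow_add]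
      ring
    have h3 : ∑ i ∈ range t, (1/2 : ℝ) ^ i ≤ 2 := by
      rw [geom_sum_eq (by norm_num : (1/2 : ℝ) ≠ 1) t,
        div_le_iff_of_neg (by norm_num : (1/2 : ℝ) - 1 < 0)]
      have : (0:ℝ) ≤ (1/2 : ℝ) ^ t := by positivity
      linarith
    rw [h1, h2]
    nlinarith

lemma term_upper {x y : ℝ} (hy : 0 ≤ y) {m : ℕ} (hm : 1 ≤ m) (hxy : 2 * m * y ≤ x)
    (i : ℕ) (hi : i ∈ range (m + 1)) :
    (1 - (-1 : ℝ) ^ i) * y ^ i * x ^ (m - i) * (m.choose i)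
      ≤ (2 * m * y * x ^ (m - 1)) * ucoef i := by
  have hx : 0 ≤ x := le_trans (by positivity) hxy
  have hF : 0 ≤ 2 * (m : ℝ) * y * x ^ (m - 1) := by positivity
  rcases Nat.even_or_odd i with he | ho
  · rw [he.neg_one_pow]
    simp only [sub_self, zero_mul]
    exact mul_nonneg hF (ucoef_nonneg i)
  · -- odd case
    rw [ho.neg_one_pow]
    have him : i ≤ m := by simpa using Nat.lt_succ_iff.mp (Finset.mem_range.mp hi)
    obtain ⟨j, rfl⟩ : ∃ j, i = j + 1 := ⟨i - 1, by rcases ho with ⟨t, ht⟩; omega⟩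
    -- first: the raw bound  (1-(-1))*y^i*x^(m-i)*C ≤ F / (i! * 2^(i-1))
    have hraw : (1 - (-1 : ℝ)) * y ^ (j+1) * x ^ (m - (j+1)) * (m.choose (j+1))
        ≤ (2 * m * y * x ^ (m - 1)) * (1 / ((j+1).factorial * 2 ^ j)) := by
      have hfac : ((m.choose (j+1) : ℝ)) * ((j+1).factorial) ≤ (m : ℝ) ^ (j+1) := by
        have h1 : m.choose (j+1) * (j+1).factorial ≤ m ^ (j+1) := by
          rw [mul_comm, ← Nat.descFactorial_eq_factorial_mul_choose]
          exact Nat.descFactorial_le_pow m (j+1)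
        exact_mod_cast h1
      have hpow : (2 * (m : ℝ) * y) ^ j ≤ x ^ j := pow_le_pow_left₀ (by positivity) hxy j
      have hxsplit : x ^ j * x ^ (m - (j+1)) = x ^ (m - 1) := by
        rw [← pow_add]; congr 1; omega
      rw [mul_one_div, le_div_iff₀ (by positivity : (0:ℝ) < ((j+1).factorial : ℝ) * 2 ^ j)]
      have key : (2 : ℝ) * (m.choose (j+1) * (j+1).factorial) * (2 ^ j * y ^ (j+1) * x ^ (m - (j+1)))
          ≤ 2 * (m : ℝ) ^ (j+1) * (2 ^ j * y ^ (j+1) * x ^ (m - (j+1))) := by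
        have hnn : (0:ℝ) ≤ 2 ^ j * y ^ (j+1) * x ^ (m - (j+1)) := by positivity
        nlinarith [mul_le_mul_of_nonneg_right hfac hnn]
      have key2 : 2 * (m : ℝ) ^ (j+1) * (2 ^ j * y ^ (j+1) * x ^ (m - (j+1)))
          = 2 * m * y * ((2 * m * y) ^ j * x ^ (m - (j+1))) := by
        rw [mul_pow, mul_pow]; ring
      have key3 : 2 * (m:ℝ) * y * ((2 * m * y) ^ j * x ^ (m - (j+1)))
          ≤ 2 * m * y * (x ^ j * x ^ (m - (j+1))) := by
        have : (2 * (m:ℝ) * y) ^ j * x ^ (m - (j+1)) ≤ x ^ j * x ^ (m - (j+1)) :=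
          mul_le_mul_of_nonneg_right hpow (by positivity)
        exact mul_le_mul_of_nonneg_left this (by positivity)
      calc (1 - (-1 : ℝ)) * y ^ (j+1) * x ^ (m - (j+1)) * (m.choose (j+1))
            * (((j+1).factorial : ℝ) * 2 ^ j)
          = (2 : ℝ) * (m.choose (j+1) * (j+1).factorial) * (2 ^ j * y ^ (j+1) * x ^ (m - (j+1))) := by
            ring
        _ ≤ 2 * (m : ℝ) ^ (j+1) * (2 ^ j * y ^ (j+1) * x ^ (m - (j+1))) := key
        _ = 2 * m * y * ((2 * m * y) ^ j * x ^ (m - (j+1))) := key2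
        _ ≤ 2 * m * y * (x ^ j * x ^ (m - (j+1))) := key3
        _ = 2 * m * y * x ^ (m - 1) := by rw [hxsplit]
    -- second: 1/(i! 2^(i-1)) ≤ ucoef i for odd i
    have hcu : (1 : ℝ) / ((j+1).factorial * 2 ^ j) ≤ ucoef (j+1) := by
      rcases Nat.lt_or_ge (j+1) 5 with h5 | h5
      · have hj3 : j ≤ 3 := by omega
        interval_cases j
        · norm_num [ucoef, Nat.factorial]
        · exfalso; revert ho; decide
        · norm_num [ucoef, Nat.factorial]
        · exfalso; revert ho; decide
      · have e1 : ¬(j + 1 = 1) := by omega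
        have e2 : ¬(j + 1 = 3) := by omega
        rw [ucoef, if_neg e1, if_neg e2, if_pos h5]
        have hfac : (120 : ℝ) ≤ ((j+1).factorial : ℝ) := by
          exact_mod_cast Nat.factorial_le h5
        rw [Nat.add_sub_cancel, div_le_iff₀ (by positivity : (0:ℝ) < ((j+1).factorial : ℝ) * 2 ^ j)]
        have hone : (2:ℝ) ^ j * (1/2) ^ j = 1 := by
          rw [← mul_pow]; norm_num
        nlinarith [mul_le_mul_of_nonneg_left hfac
          (by positivity : (0:ℝ) ≤ (1/120 : ℝ) * (1/2)^j * 2 ^ j)]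
    calc (1 - (-1 : ℝ)) * y ^ (j+1) * x ^ (m - (j+1)) * (m.choose (j+1))
        ≤ (2 * m * y * x ^ (m - 1)) * (1 / ((j+1).factorial * 2 ^ j)) := hraw
      _ ≤ (2 * m * y * x ^ (m - 1)) * ucoef (j+1) := mul_le_mul_of_nonneg_left hcu hF

lemma diff_upper {x y : ℝ} (hy : 0 ≤ y) {m : ℕ} (hm : 1 ≤ m) (hxy : 2 * m * y ≤ x) :
    (x + y) ^ m - (x - y) ^ m ≤ (1001 / 960) * (2 * m * y * x ^ (m - 1)) := by
  have hx : 0 ≤ x := le_trans (by positivity) hxy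
  have hF : 0 ≤ 2 * (m : ℝ) * y * x ^ (m - 1) := by positivity
  rw [expand_diff]
  calc ∑ i ∈ range (m + 1), (1 - (-1 : ℝ) ^ i) * y ^ i * x ^ (m - i) * (m.choose i)
      ≤ ∑ i ∈ range (m + 1), (2 * m * y * x ^ (m - 1)) * ucoef i :=
        Finset.sum_le_sum (term_upper hy hm hxy)
    _ = (2 * m * y * x ^ (m - 1)) * ∑ i ∈ range (m + 1), ucoef i := by
        rw [Finset.mul_sum]
    _ ≤ (2 * m * y * x ^ (m - 1)) * (1001 / 960) :=
        mul_le_mul_of_nonneg_left (ucoef_sum_le (m+1)) hF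
    _ = (1001 / 960) * (2 * m * y * x ^ (m - 1)) := by ring

lemma sum_id_real (k : ℕ) : ∑ j ∈ range k, ((j : ℝ) + 1) = (k : ℝ) * ((k : ℝ) + 1) / 2 := by
  induction k with
  | zero => simp
  | succ k ih => rw [Finset.sum_range_succ, ih]; push_cast; field_simp; ring

lemma sum_cube_real (k : ℕ) : ∑ j ∈ range k, ((j : ℝ) + 1) ^ 3 = ((k : ℝ) * ((k : ℝ) + 1) / 2) ^ 2 := by
  induction k with
  | zero => simp
  | succ k ih => rw [Finset.sum_range_succ, ih]; push_cast; field_simp; ring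

set_option maxHeartbeats 1000000 in
/-- If `ℓ ≥ 3` and `(k, n)` is a positive solution of equation (1), with `w = n + k`,
`K = k(k+1)` and `a = (ℓ-1)(ℓ-2)/(12ℓ)`, then `w ≥ ℓK + (11/12)a` as real numbers. -/
theorem w_ge_lower (ℓ k n w : ℕ) (hℓ : 3 ≤ ℓ) (hk : 0 < k) (hn : 0 < n)
    (hw : w = n + k)
    (heq : ∑ i ∈ Finset.range (k + 1), (n + i) ^ ℓ =
        ∑ i ∈ Finset.Icc (k + 1) (2 * k), (n + i) ^ ℓ)
    (K a : ℝ) (hK : K = (k : ℝ) * ((k : ℝ) + 1))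
    (ha : a = ((ℓ : ℝ) - 1) * ((ℓ : ℝ) - 2) / (12 * (ℓ : ℝ))) :
    (ℓ : ℝ) * K + 11 / 12 * a ≤ (w : ℝ) := by
  -- step 1 : reindex the equation
  have h1 : ∑ i ∈ range (k+1), (n+i)^ℓ
      = (∑ j ∈ range k, (n + (k - (j+1)))^ℓ) + (n+k)^ℓ := by
    rw [← Finset.sum_range_reflect (fun i => (n + i)^ℓ) (k+1), Finset.sum_range_succ']
    simp only [Nat.add_sub_cancel, Nat.sub_zero]
  have h2 : ∑ i ∈ Finset.Icc (k+1) (2*k), (n+i)^ℓ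
      = ∑ j ∈ range k, (n + (k+1+j))^ℓ := by
    rw [← Finset.Ico_add_one_right_eq_Icc, Finset.sum_Ico_eq_sum_range]
    have hkk : 2 * k + 1 - (k + 1) = k := by omega
    rw [hkk]
  rw [h1, h2] at heq
  -- step 2 : cast to ℝ
  set W : ℝ := (w : ℝ) with hWdef
  have hWval : W = (n : ℝ) + k := by rw [hWdef, hw]; push_cast; ring
  have hWpos : 0 < W := by rw [hWval]; positivity
  have key : W ^ ℓ = ∑ j ∈ range k, ((W + ((j:ℝ)+1)) ^ ℓ - (W - ((j:ℝ)+1)) ^ ℓ) := by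
    have hcast := congrArg (Nat.cast : ℕ → ℝ) heq
    push_cast at hcast
    have hl : ∑ j ∈ range k, ((n + (k - (j+1)) : ℕ) : ℝ)^ℓ
        = ∑ j ∈ range k, (W - ((j:ℝ)+1))^ℓ := by
      refine Finset.sum_congr rfl fun j hj => ?_
      have hjk : j + 1 ≤ k := Finset.mem_range.mp hj
      congr 1
      push_cast [Nat.cast_sub hjk]
      rw [hWval]; ring
    have hr : ∑ j ∈ range k, ((n + (k+1+j) : ℕ) : ℝ)^ℓ
        = ∑ j ∈ range k, (W + ((j:ℝ)+1))^ℓ := by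
      refine Finset.sum_congr rfl fun j hj => ?_
      congr 1
      push_cast
      rw [hWval]; ring
    push_cast at hl hr
    rw [Finset.sum_sub_distrib, ← hr, ← hl]
    have hWn : ((n:ℝ) + (k:ℝ)) ^ ℓ = W ^ ℓ := by rw [hWval]
    linarith [hcast, hWn]
  -- abbreviations and positivity facts
  have hL3 : (3:ℝ) ≤ (ℓ:ℝ) := by exact_mod_cast hℓ
  have hLpos : (0:ℝ) < (ℓ:ℝ) := by linarith
  have hKpos : 0 < K := by
    rw [hK]; have : (0:ℝ) < (k:ℝ) := by exact_mod_cast hk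
    positivity
  have hk1 : (2:ℝ) ≤ (k:ℝ) + 1 := by
    have : (1:ℝ) ≤ (k:ℝ) := by exact_mod_cast hk
    linarith
  -- lower bound summation
  have hlow : (ℓ:ℝ) * K * W ^ (ℓ-1) + (ℓ.choose 3 : ℝ) * K ^ 2 / 2 * W ^ (ℓ-3) ≤ W ^ ℓ := by
    have hterm : ∀ j ∈ range k,
        2 * (ℓ:ℝ) * ((j:ℝ)+1) * W ^ (ℓ-1) + 2 * (ℓ.choose 3 : ℝ) * ((j:ℝ)+1) ^ 3 * W ^ (ℓ-3)
          ≤ (W + ((j:ℝ)+1)) ^ ℓ - (W - ((j:ℝ)+1)) ^ ℓ :=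
      fun j _ => diff_lower hWpos.le (by positivity) hℓ
    have hsum := Finset.sum_le_sum hterm
    rw [← key, Finset.sum_add_distrib] at hsum
    have e1 : ∑ j ∈ range k, 2 * (ℓ:ℝ) * ((j:ℝ)+1) * W ^ (ℓ-1)
        = (ℓ:ℝ) * K * W ^ (ℓ-1) := by
      calc ∑ j ∈ range k, 2 * (ℓ:ℝ) * ((j:ℝ)+1) * W ^ (ℓ-1)
          = (2 * (ℓ:ℝ) * W ^ (ℓ-1)) * ∑ j ∈ range k, ((j:ℝ)+1) := by
            rw [Finset.mul_sum]; exact Finset.sum_congr rfl fun j _ => by ring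
        _ = (ℓ:ℝ) * K * W ^ (ℓ-1) := by rw [sum_id_real, hK]; ring
    have e2 : ∑ j ∈ range k, 2 * (ℓ.choose 3 : ℝ) * ((j:ℝ)+1) ^ 3 * W ^ (ℓ-3)
        = (ℓ.choose 3 : ℝ) * K ^ 2 / 2 * W ^ (ℓ-3) := by
      calc ∑ j ∈ range k, 2 * (ℓ.choose 3 : ℝ) * ((j:ℝ)+1) ^ 3 * W ^ (ℓ-3)
          = (2 * (ℓ.choose 3 : ℝ) * W ^ (ℓ-3)) * ∑ j ∈ range k, ((j:ℝ)+1) ^ 3 := by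
            rw [Finset.mul_sum]; exact Finset.sum_congr rfl fun j _ => by ring
        _ = (ℓ.choose 3 : ℝ) * K ^ 2 / 2 * W ^ (ℓ-3) := by rw [sum_cube_real, hK]; ring
    rw [e1, e2] at hsum
    exact hsum
  -- pow splittings
  have hWl3 : (0:ℝ) < W ^ (ℓ-3) := by positivity
  have hWl1 : (0:ℝ) < W ^ (ℓ-1) := by positivity
  have hsplit1 : W ^ ℓ = W ^ 3 * W ^ (ℓ-3) := by rw [← pow_add]; congr 1; omega
  have hsplit2 : W ^ (ℓ-1) = W ^ 2 * W ^ (ℓ-3) := by rw [← pow_add]; congr 1; omega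
  have hsplit3 : W ^ ℓ = W * W ^ (ℓ-1) := by
    rw [show W * W ^ (ℓ-1) = W ^ 1 * W ^ (ℓ-1) by ring, ← pow_add]; congr 1; omega
  -- cubic inequality
  have hcube : (ℓ:ℝ) * K * W ^ 2 + (ℓ.choose 3 : ℝ) * K ^ 2 / 2 ≤ W ^ 3 := by
    have h1 : ((ℓ:ℝ) * K * W ^ 2 + (ℓ.choose 3 : ℝ) * K ^ 2 / 2) * W ^ (ℓ-3)
        ≤ W ^ 3 * W ^ (ℓ-3) := by
      rw [hsplit1, hsplit2] at hlow
      nlinarith [hlow]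
    exact le_of_mul_le_mul_right h1 hWl3
  -- choose 3 value
  have hC3 : (ℓ.choose 3 : ℝ) = (ℓ:ℝ) * ((ℓ:ℝ)-1) * ((ℓ:ℝ)-2) / 6 := by
    have hd : ℓ.descFactorial 3 = 6 * ℓ.choose 3 := by
      rw [Nat.descFactorial_eq_factorial_mul_choose]; norm_num [Nat.factorial]
    have hd2 : ℓ.descFactorial 3 = (ℓ-2) * ((ℓ-1) * ℓ) := by
      simp [Nat.descFactorial_succ]
    have h6 : 6 * ℓ.choose 3 = (ℓ-2) * ((ℓ-1) * ℓ) := by rw [← hd, hd2]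
    have hcast := congrArg (Nat.cast : ℕ → ℝ) h6
    push_cast [Nat.cast_sub (by omega : 2 ≤ ℓ), Nat.cast_sub (by omega : 1 ≤ ℓ)] at hcast
    linarith
  have hC3nn : (0:ℝ) ≤ (ℓ.choose 3 : ℝ) := by positivity
  -- W ≥ ℓK
  have hWK : (ℓ:ℝ) * K ≤ W := by
    have h1 : (ℓ:ℝ) * K * W ^ 2 ≤ W * W ^ 2 := by nlinarith [hcube, hC3nn, sq_nonneg K]
    exact le_of_mul_le_mul_right h1 (by positivity)
  -- upper bound
  have hup : W ≤ 1001/960 * ((ℓ:ℝ) * K) := by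
    have hterm : ∀ j ∈ range k,
        (W + ((j:ℝ)+1)) ^ ℓ - (W - ((j:ℝ)+1)) ^ ℓ
          ≤ (1001/960) * (2 * (ℓ:ℝ) * ((j:ℝ)+1) * W ^ (ℓ-1)) := by
      intro j hj
      have hjk : (j:ℝ) + 1 ≤ (k:ℝ) := by exact_mod_cast Finset.mem_range.mp hj
      have hkr : (0:ℝ) ≤ (k:ℝ) := by positivity
      have hKk : (ℓ:ℝ) * ((k:ℝ) * ((k:ℝ)+1)) ≤ W := by rw [← hK]; exact hWK
      have hyW : 2 * (ℓ:ℝ) * ((j:ℝ)+1) ≤ W := by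
        have s1 : 2 * (ℓ:ℝ) * ((j:ℝ)+1) ≤ 2 * (ℓ:ℝ) * (k:ℝ) :=
          mul_le_mul_of_nonneg_left hjk (by positivity)
        have s2 : 2 * (ℓ:ℝ) * (k:ℝ) ≤ (ℓ:ℝ) * ((k:ℝ) * ((k:ℝ)+1)) := by
          nlinarith [mul_nonneg (mul_nonneg hLpos.le hkr)
            (show (0:ℝ) ≤ (k:ℝ) - 1 by linarith)]
        linarith
      exact diff_upper (by positivity) (by omega : 1 ≤ ℓ) hyW
    have hsum := Finset.sum_le_sum hterm
    rw [← key] at hsum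
    have e3 : ∑ j ∈ range k, (1001/960) * (2 * (ℓ:ℝ) * ((j:ℝ)+1) * W ^ (ℓ-1))
        = (1001/960) * ((ℓ:ℝ) * K) * W ^ (ℓ-1) := by
      calc ∑ j ∈ range k, (1001/960) * (2 * (ℓ:ℝ) * ((j:ℝ)+1) * W ^ (ℓ-1))
          = ((1001/960) * 2 * (ℓ:ℝ) * W ^ (ℓ-1)) * ∑ j ∈ range k, ((j:ℝ)+1) := by
            rw [Finset.mul_sum]; exact Finset.sum_congr rfl fun j _ => by ring
        _ = (1001/960) * ((ℓ:ℝ) * K) * W ^ (ℓ-1) := by rw [sum_id_real, hK]; ring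
    rw [e3, hsplit3] at hsum
    exact le_of_mul_le_mul_right hsum hWl1
  -- combine
  have hdiff : (0:ℝ) ≤ W - (ℓ:ℝ) * K := by linarith
  have hW2 : W ^ 2 ≤ (1001/960 * ((ℓ:ℝ) * K)) ^ 2 := by nlinarith [hup, hWpos.le, hWK]
  have hstep3 : (ℓ:ℝ) * ((ℓ:ℝ)-1) * ((ℓ:ℝ)-2) / 12
      ≤ (W - (ℓ:ℝ) * K) * ((1001/960) * (ℓ:ℝ)) ^ 2 := by
    have hA : ((ℓ:ℝ) * ((ℓ:ℝ)-1) * ((ℓ:ℝ)-2) / 12) * K ^ 2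
        ≤ ((W - (ℓ:ℝ) * K) * ((1001/960) * (ℓ:ℝ)) ^ 2) * K ^ 2 := by
      have hprod := mul_le_mul_of_nonneg_left hW2 hdiff
      nlinarith [hcube, hprod, hC3]
    exact le_of_mul_le_mul_right hA (by positivity)
  have hP : (0:ℝ) ≤ ((ℓ:ℝ)-1) * ((ℓ:ℝ)-2) := by nlinarith [hL3]
  rw [ha]
  have hmain : 11/12 * (((ℓ:ℝ)-1) * ((ℓ:ℝ)-2) / (12 * (ℓ:ℝ))) ≤ W - (ℓ:ℝ) * K := by
    rw [show (11:ℝ)/12 * (((ℓ:ℝ)-1) * ((ℓ:ℝ)-2) / (12 * (ℓ:ℝ)))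
        = 11 * (((ℓ:ℝ)-1) * ((ℓ:ℝ)-2)) / (144 * (ℓ:ℝ)) by ring,
      div_le_iff₀ (by linarith : (0:ℝ) < 144 * (ℓ:ℝ))]
    nlinarith [hstep3, hLpos, hdiff, hP, mul_nonneg hP hLpos.le]
  linarith
end
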